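/- arXiv:2510.27142 — 2 statements merged into one kernel-verified Lean document; each statement's English description precedes it below -/
import Mathlib

section
/- (Lemma 2.2, adjoint reduction.) For every integer N ≥ 3 the following identity of ℂ-linear operators on V holds (indices taken mod N, so x̌_0 = x̌_N): e_q(−x̌_{N−2}) ∘ e_q(−x̌_{N−3}) ∘ ⋯ ∘ e_q(−x̌_1) ∘ e_q(−x̌_0) ∘ e_q(−x̌_1)^{−1} ∘ ⋯ ∘ e_q(−x̌_{N−2})^{−1} = e_q(−x̌_0) ∘ e_q(−x̌_0∘x̌_1) ∘ e_q(−x̌_0∘x̌_1∘x̌_2) ∘ ⋯ ∘ e_q(−x̌_0∘x̌_1∘⋯∘x̌_{N−2}). -/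
/-!
Lemma 2.2 (adjoint reduction).  `V = MvPowerSeries (ZMod N) ℂ`; `p i` is the
automorphism `x^ν ↦ q^{ν_i} x^ν`; `x̌_i = M_{x_i} ∘ p_i⁻¹ ∘ p_{i-1}` is
degree-raising.  For degree-raising `T` the q-exponentials
`e_q(−T) = ∑ (−1)ⁿTⁿ/(q;q)_n` and `E_q(T) = ∑ q^{n(n−1)/2}Tⁿ/(q;q)_n` are
defined by their (finite) coefficientwise sums, and `E_q(T) = e_q(−T)⁻¹`.
-/

noncomputable section
open scoped Classical

variable {N : ℕ}

def qPoch (q : ℂ) (n : ℕ) : ℂ := ∏ k ∈ Finset.range n, (1 - q ^ (k + 1))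

def degOf (ν : ZMod N →₀ ℕ) : ℕ := ν.sum fun _ k => k

/-- the automorphism `p_i : x^ν ↦ q^{ν_i} x^ν`. -/
def pmap (q : ℂ) (i : ZMod N) (f : MvPowerSeries (ZMod N) ℂ) : MvPowerSeries (ZMod N) ℂ :=
  fun ν => q ^ (ν i) * f ν

/-- the inverse automorphism `p_i⁻¹ : x^ν ↦ q^{−ν_i} x^ν`. -/
def pinv (q : ℂ) (i : ZMod N) (f : MvPowerSeries (ZMod N) ℂ) : MvPowerSeries (ZMod N) ℂ :=
  fun ν => q ^ (-(ν i : ℤ)) * f ν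

/-- `x̌_i := M_{x_i} ∘ p_i⁻¹ ∘ p_{i−1}` (apply `p_{i−1}`, then `p_i⁻¹`, then
multiply by `x_i`). -/
def xcheck (q : ℂ) (i : ZMod N) (f : MvPowerSeries (ZMod N) ℂ) : MvPowerSeries (ZMod N) ℂ :=
  MvPowerSeries.X i * pinv q i (pmap q (i - 1) f)

/-- `e_q(−T) = ∑_{n≥0} (−1)ⁿ Tⁿ/(q;q)_n`, coefficientwise finite for
degree-raising `T`. -/
def eqExp (q : ℂ) (T : MvPowerSeries (ZMod N) ℂ → MvPowerSeries (ZMod N) ℂ)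
    (f : MvPowerSeries (ZMod N) ℂ) : MvPowerSeries (ZMod N) ℂ :=
  fun ν => ∑ n ∈ Finset.range (degOf ν + 1), ((-1 : ℂ) ^ n / qPoch q n) * (T^[n] f) ν

/-- `E_q(T) = ∑_{n≥0} q^{n(n−1)/2} Tⁿ/(q;q)_n = e_q(−T)⁻¹`, coefficientwise
finite for degree-raising `T`. -/
def EqExp (q : ℂ) (T : MvPowerSeries (ZMod N) ℂ → MvPowerSeries (ZMod N) ℂ)
    (f : MvPowerSeries (ZMod N) ℂ) : MvPowerSeries (ZMod N) ℂ :=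
  fun ν => ∑ n ∈ Finset.range (degOf ν + 1), (q ^ (n * (n - 1) / 2) / qPoch q n) * (T^[n] f) ν

/-- ascending composite `F 0 ∘ F 1 ∘ ⋯ ∘ F (k−1)`. -/
def compAsc {α : Type*} (F : ℕ → α → α) : ℕ → α → α
  | 0 => id
  | k + 1 => compAsc F k ∘ F k

/-- descending composite `F (k−1) ∘ ⋯ ∘ F 1 ∘ F 0`. -/
def compDesc {α : Type*} (F : ℕ → α → α) : ℕ → α → α
  | 0 => id
  | k + 1 => F k ∘ compDesc F k


namespace AdjRed
variable (q : ℂ)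

lemma qPoch_succ (n : ℕ) : qPoch q (n+1) = qPoch q n * (1 - q ^ (n+1)) :=
  Finset.prod_range_succ _ _

lemma qPoch_zero : qPoch q 0 = 1 := rfl

variable (hq : ∀ n : ℕ, 0 < n → q ^ n ≠ 1)
include hq

lemma one_sub_pow_ne (n : ℕ) : (1 : ℂ) - q ^ (n+1) ≠ 0 := by
  intro h
  exact hq (n+1) (Nat.succ_pos n) (by linear_combination -h)

lemma qPoch_ne_zero (n : ℕ) : qPoch q n ≠ 0 := by
  induction n with
  | zero => simp [qPoch_zero]
  | succ n ih => rw [qPoch_succ]; exact mul_ne_zero ih (one_sub_pow_ne q hq n)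

omit hq

/-- q-binomial coefficient, via the Pascal recurrence
`[n+1, k+1] = [n, k+1] + q^(n-k) [n, k]`. -/
def qb : ℕ → ℕ → ℂ
  | _, 0 => 1
  | 0, (_+1) => 0
  | (n+1), (k+1) => qb n (k+1) + q ^ (n - k) * qb n k

@[simp] lemma qb_zero_right (n : ℕ) : qb q n 0 = 1 := by cases n <;> rfl

@[simp] lemma qb_zero_succ (k : ℕ) : qb q 0 (k+1) = 0 := rfl

lemma qb_succ_succ (n k : ℕ) : qb q (n+1) (k+1) = qb q n (k+1) + q ^ (n - k) * qb q n k := rfl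

lemma qb_eq_zero_of_lt : ∀ {n k : ℕ}, n < k → qb q n k = 0 := by
  intro n
  induction n with
  | zero => intro k hk; match k, hk with | (k+1), _ => rfl
  | succ n ih =>
      intro k hk
      match k, hk with
      | (k+1), hk =>
        rw [qb_succ_succ, ih (by omega), ih (by omega), mul_zero, add_zero]

@[simp] lemma qb_diag (n : ℕ) : qb q n n = 1 := by
  induction n with
  | zero => rfl
  | succ n ih => rw [qb_succ_succ, qb_eq_zero_of_lt q (by omega), ih]; simp

lemma qb_mul_qPoch (n k : ℕ) (hk : k ≤ n) :
    qPoch q k * qPoch q (n - k) * qb q n k = qPoch q n := by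
  induction n generalizing k with
  | zero => interval_cases k; simp [qPoch_zero]
  | succ n ih =>
      rcases Nat.eq_zero_or_pos k with rfl | hkpos
      · simp [qPoch_zero]
      obtain ⟨k, rfl⟩ : ∃ m, k = m + 1 := ⟨k-1, by omega⟩
      rcases Nat.lt_or_ge (k+1) (n+1) with hlt | hge
      · -- k+1 ≤ n
        have hk1 : k + 1 ≤ n := by omega
        have hkn : k ≤ n := by omega
        rw [qb_succ_succ]
        have e1 : n + 1 - (k + 1) = n - k := by omega
        set a := n - (k+1) with ha0
        have ha : n - k = a + 1 := by omega
        have ih1 : qPoch q (k+1) * qPoch q a * qb q n (k+1) = qPoch q n := ih (k+1) hk1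
        have ih2 : qPoch q k * qPoch q (a+1) * qb q n k = qPoch q n := by
          rw [← ha]; exact ih k hkn
        have hx : q ^ (a+1) * q ^ (k + 1) = q ^ (n + 1) := by
          rw [← pow_add]; congr 1; omega
        rw [qPoch_succ] at ih1 ih2
        rw [e1, ha, qPoch_succ q a, qPoch_succ q n, qPoch_succ q k]
        linear_combination (1 - q^(a+1)) * ih1 + q^(a+1)*(1 - q^(k+1)) * ih2 - qPoch q n * hx
      · -- k+1 = n+1
        have : k = n := by omega
        subst this
        simp [qPoch_zero]

/-- triangular number `n(n-1)/2`. -/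
def tri (n : ℕ) : ℕ := n * (n - 1) / 2

lemma tri_succ (k : ℕ) : tri (k+1) = tri k + k := by
  unfold tri
  rw [show (k+1) * (k+1-1) / 2 = (k+1).choose 2 from (Nat.choose_two_right _).symm,
    show k * (k-1) / 2 = k.choose 2 from (Nat.choose_two_right _).symm]
  rw [Nat.choose_succ_succ]
  simp [Nat.choose_one_right, Nat.add_comm]

lemma neg_one_pow_sub {m s : ℕ} (h : m ≤ s) : ((-1 : ℂ)) ^ (s - m) = (-1) ^ s * (-1) ^ m := by
  have h1 : ((-1 : ℂ)) ^ (s - m) * (-1) ^ m = (-1) ^ s := by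
    rw [← pow_add, Nat.sub_add_cancel h]
  have h2 : ((-1 : ℂ)) ^ m * (-1) ^ m = 1 := by
    rw [← pow_add, ← two_mul, pow_mul]; simp
  calc ((-1 : ℂ)) ^ (s - m) = ((-1 : ℂ)) ^ (s - m) * ((-1) ^ m * (-1) ^ m) := by rw [h2, mul_one]
    _ = (-1) ^ s * (-1) ^ m := by rw [← mul_assoc, h1]

include hq

lemma qb_pascal2 (n k : ℕ) :
    qb q (n+1) (k+1) = q ^ (k+1) * qb q n (k+1) + qb q n k := by
  rcases Nat.lt_or_ge n k with h | h
  · rw [qb_eq_zero_of_lt q (by omega), qb_eq_zero_of_lt q (by omega),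
      qb_eq_zero_of_lt q (by omega)]
    ring
  rcases Nat.eq_or_lt_of_le h with rfl | hlt
  · rw [qb_eq_zero_of_lt q (Nat.lt_succ_self k)]
    simp
  -- k + 1 ≤ n
  have hk1 : k + 1 ≤ n := hlt
  have hM : qPoch q (k+1) * qPoch q (n - k) ≠ 0 :=
    mul_ne_zero (qPoch_ne_zero q hq _) (qPoch_ne_zero q hq _)
  apply mul_left_cancel₀ hM
  set a := n - (k+1) with ha0
  have ha : n - k = a + 1 := by omega
  have e1 : n + 1 - (k + 1) = n - k := by omega
  have P1 : qPoch q (k+1) * qPoch q (n + 1 - (k+1)) * qb q (n+1) (k+1) = qPoch q (n+1) :=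
    qb_mul_qPoch q (n+1) (k+1) (by omega)
  have P2 : qPoch q (k+1) * qPoch q a * qb q n (k+1) = qPoch q n := by
    have := qb_mul_qPoch q n (k+1) hk1
    rwa [← ha0] at this
  have P3 : qPoch q k * qPoch q (n - k) * qb q n k = qPoch q n :=
    qb_mul_qPoch q n k (by omega)
  have hx : q ^ (a+1) * q ^ (k + 1) = q ^ (n + 1) := by
    rw [← pow_add]; congr 1; omega
  rw [e1] at P1
  rw [ha] at P1 P3 ⊢
  rw [qPoch_succ q a] at P1 P3 ⊢
  rw [qPoch_succ q n] at P1
  rw [qPoch_succ q k] at P1 P2 ⊢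
  linear_combination P1 - q^(k+1)*(1 - q^(a+1)) * P2 - (1 - q^(k+1)) * P3 + qPoch q n * hx

lemma qPoch_qb_step (M k : ℕ) :
    qPoch q (k+1) * qb q M (k+1) = qPoch q k * qb q M k * (1 - q ^ (M - k)) := by
  rcases Nat.lt_or_ge k M with h | h
  · -- k < M
    have hC : qPoch q (M - (k+1)) ≠ 0 := qPoch_ne_zero q hq _
    apply mul_right_cancel₀ hC
    have P1 : qPoch q (k+1) * qPoch q (M - (k+1)) * qb q M (k+1) = qPoch q M :=
      qb_mul_qPoch q M (k+1) (by omega)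
    have P2 : qPoch q k * qPoch q (M - k) * qb q M k = qPoch q M :=
      qb_mul_qPoch q M k (by omega)
    have ha : M - k = (M - (k+1)) + 1 := by omega
    rw [ha, qPoch_succ] at P2
    rw [ha]
    linear_combination P1 - P2
  · -- M ≤ k
    rw [qb_eq_zero_of_lt q (by omega), show M - k = 0 from by omega]
    simp

lemma qb_symm (n k : ℕ) (hk : k ≤ n) : qb q n (n - k) = qb q n k := by
  have hM : qPoch q k * qPoch q (n - k) ≠ 0 :=
    mul_ne_zero (qPoch_ne_zero q hq _) (qPoch_ne_zero q hq _)
  apply mul_left_cancel₀ hM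
  have P1 : qPoch q (n-k) * qPoch q (n - (n-k)) * qb q n (n-k) = qPoch q n :=
    qb_mul_qPoch q n (n-k) (by omega)
  have P2 : qPoch q k * qPoch q (n - k) * qb q n k = qPoch q n :=
    qb_mul_qPoch q n k hk
  rw [show n - (n - k) = k from by omega] at P1
  rw [P2, ← P1]; ring

omit hq

/-- the alternating q-binomial sum. -/
def qbAlt (n : ℕ) : ℂ := ∑ k ∈ Finset.range (n+1), (-1 : ℂ)^k * q ^ (tri k) * qb q n k

lemma qbAlt_succ (n : ℕ) : qbAlt q (n+1) = (1 - q^n) * qbAlt q n := by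
  unfold qbAlt
  rw [Finset.sum_range_succ' (fun k => (-1 : ℂ)^k * q ^ (tri k) * qb q (n+1) k) (n+1)]
  have split : ∀ k ∈ Finset.range (n+1),
      (-1 : ℂ)^(k+1) * q ^ (tri (k+1)) * qb q (n+1) (k+1)
      = (-1 : ℂ)^(k+1) * q ^ (tri (k+1)) * qb q n (k+1)
        + (-q^n) * ((-1 : ℂ)^k * q ^ (tri k) * qb q n k) := by
    intro k hk
    have hkn : k ≤ n := by simpa [Nat.lt_succ_iff] using hk
    have hqq : q ^ (tri (k+1)) * q ^ (n - k) = q ^ (tri k) * q ^ n := by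
      rw [← pow_add, ← pow_add]; congr 1; rw [tri_succ]; omega
    rw [qb_succ_succ, pow_succ]
    linear_combination (-(1:ℂ)) * ((-1:ℂ)^k * qb q n k) * hqq
  rw [Finset.sum_congr rfl split, Finset.sum_add_distrib, ← Finset.mul_sum]
  have h1 : ∑ k ∈ Finset.range (n+1), (-1 : ℂ)^(k+1) * q ^ (tri (k+1)) * qb q n (k+1)
      = qbAlt q n - 1 := by
    have e := Finset.sum_range_succ' (fun k => (-1 : ℂ)^k * q ^ (tri k) * qb q n k) (n+1)
    have e2 : ∑ k ∈ Finset.range (n+2), (-1 : ℂ)^k * q ^ (tri k) * qb q n k = qbAlt q n := by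
      rw [Finset.sum_range_succ, qb_eq_zero_of_lt q (Nat.lt_succ_self n)]
      unfold qbAlt; simp
    rw [e2] at e
    have f0 : (-1 : ℂ)^0 * q ^ (tri 0) * qb q n 0 = 1 := by
      simp [tri]
    rw [f0] at e
    linear_combination -e
  rw [h1]
  have g0 : (-1 : ℂ)^0 * q ^ (tri 0) * qb q (n+1) 0 = 1 := by simp [tri]
  rw [g0]
  unfold qbAlt
  ring

lemma qbAlt_eq_zero (n : ℕ) (hn : 1 ≤ n) : qbAlt q n = 0 := by
  induction n with
  | zero => omega
  | succ n ih =>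
      rcases Nat.eq_zero_or_pos n with rfl | hpos
      · have : qbAlt q 1 = (1 - q^0) * qbAlt q 0 := qbAlt_succ q 0
        simpa using this
      · rw [qbAlt_succ, ih hpos, mul_zero]

/-- the key double q-binomial sum. -/
def qbT (n m : ℕ) : ℂ :=
  ∑ k ∈ Finset.range (n+1), (-1 : ℂ)^k * q ^ (tri k) * qPoch q k * qb q n k * qb q m k

include hq

lemma qbT_succ (n m : ℕ) : qbT q (n+1) m = q ^ m * qbT q n m := by
  unfold qbT
  rw [Finset.sum_range_succ'
    (fun k => (-1 : ℂ)^k * q ^ (tri k) * qPoch q k * qb q (n+1) k * qb q m k) (n+1)]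
  have split : ∀ k ∈ Finset.range (n+1),
      (-1 : ℂ)^(k+1) * q ^ (tri (k+1)) * qPoch q (k+1) * qb q (n+1) (k+1) * qb q m (k+1)
      = ((-1 : ℂ)^(k+1) * q ^ (tri (k+2)) * qPoch q (k+1) * qb q n (k+1) * qb q m (k+1))
        + (- ((-1 : ℂ)^k * q ^ (tri (k+1)) * qPoch q k * qb q n k * qb q m k))
        + q ^ m * ((-1 : ℂ)^k * q ^ (tri k) * qPoch q k * qb q n k * qb q m k) := by
    intro k hk
    rw [qb_pascal2 q hq]
    have hstep : qPoch q (k+1) * qb q m (k+1) = qPoch q k * qb q m k * (1 - q ^ (m - k)) :=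
      qPoch_qb_step q hq m k
    have he1 : q ^ (tri (k+1)) * q ^ (k+1) = q ^ (tri (k+2)) := by
      rw [← pow_add]; congr 1; rw [tri_succ (k+1)]
    -- q^(tri (k+1)) * q^(m-k) = q^(tri k) * q^m  when k ≤ m ; else qb m k = 0
    rcases le_or_gt k m with hkm | hkm
    · have he2 : q ^ (tri (k+1)) * q ^ (m - k) = q ^ (tri k) * q ^ m := by
        rw [← pow_add, ← pow_add]; congr 1; rw [tri_succ]; omega
      linear_combination ((-1:ℂ)^(k+1) * q ^ (tri (k+1)) * qb q n k) * hstep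
        + ((-1:ℂ)^(k+1) * qPoch q (k+1) * qb q n (k+1) * qb q m (k+1)) * he1
        + ((-1:ℂ)^k * qPoch q k * qb q n k * qb q m k) * he2
    · have hz1 : qb q m (k+1) = 0 := qb_eq_zero_of_lt q (by omega)
      have hz0 : qb q m k = 0 := qb_eq_zero_of_lt q hkm
      rw [hz1, hz0]
      ring
  rw [Finset.sum_congr rfl split]
  rw [Finset.sum_add_distrib, Finset.sum_add_distrib, ← Finset.mul_sum, Finset.sum_neg_distrib]
  have h1 : ∑ k ∈ Finset.range (n+1),
      (-1 : ℂ)^(k+1) * q ^ (tri (k+2)) * qPoch q (k+1) * qb q n (k+1) * qb q m (k+1)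
      = (∑ k ∈ Finset.range (n+1),
          (-1 : ℂ)^k * q ^ (tri (k+1)) * qPoch q k * qb q n k * qb q m k) - 1 := by
    have e := Finset.sum_range_succ'
      (fun k => (-1 : ℂ)^k * q ^ (tri (k+1)) * qPoch q k * qb q n k * qb q m k) (n+1)
    have e2 : ∑ k ∈ Finset.range (n+2),
        (-1 : ℂ)^k * q ^ (tri (k+1)) * qPoch q k * qb q n k * qb q m k
        = ∑ k ∈ Finset.range (n+1),
        (-1 : ℂ)^k * q ^ (tri (k+1)) * qPoch q k * qb q n k * qb q m k := by
      rw [Finset.sum_range_succ, qb_eq_zero_of_lt q (Nat.lt_succ_self n)]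
      simp
    rw [e2] at e
    have f0 : (-1 : ℂ)^0 * q ^ (tri (0+1)) * qPoch q 0 * qb q n 0 * qb q m 0 = 1 := by
      simp [tri, qPoch_zero]
    rw [f0] at e
    linear_combination -e
  rw [h1]
  have g0 : (-1 : ℂ)^0 * q ^ (tri 0) * qPoch q 0 * qb q (n+1) 0 * qb q m 0 = 1 := by
    simp [tri, qPoch_zero]
  rw [g0]
  ring

lemma qbT_eq (n m : ℕ) : qbT q n m = q ^ (n * m) := by
  induction n with
  | zero => unfold qbT; simp [tri, qPoch_zero]
  | succ n ih =>
      rw [qbT_succ q hq, ih, ← pow_add]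
      congr 1
      ring

/-- Euler: coefficientwise inverse relation between `e_q(-T)` and `E_q(T)`. -/
lemma euler_coeff (s : ℕ) :
    ∑ m ∈ Finset.range (s+1),
      ((-1:ℂ)^m / qPoch q m) * (q ^ (tri (s-m)) / qPoch q (s-m))
    = if s = 0 then 1 else 0 := by
  have key : ∀ m ∈ Finset.range (s+1),
      ((-1:ℂ)^m / qPoch q m) * (q ^ (tri (s-m)) / qPoch q (s-m))
      = ((-1:ℂ)^m * q ^ (tri (s-m)) * qb q s m) / qPoch q s := by
    intro m hm
    have hm' : m ≤ s := by simpa [Nat.lt_succ_iff] using hm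
    rw [div_mul_div_comm, div_eq_div_iff
      (mul_ne_zero (qPoch_ne_zero q hq m) (qPoch_ne_zero q hq (s-m))) (qPoch_ne_zero q hq s)]
    linear_combination (-((-1:ℂ)^m * q ^ (tri (s-m)))) * (qb_mul_qPoch q s m hm')
  rw [Finset.sum_congr rfl key, ← Finset.sum_div]
  have hA : ∑ m ∈ Finset.range (s+1), (-1:ℂ)^m * q ^ (tri (s-m)) * qb q s m
      = (-1:ℂ)^s * qbAlt q s := by
    rw [← Finset.sum_range_reflect (fun m => (-1:ℂ)^m * q ^ (tri (s-m)) * qb q s m) (s+1)]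
    unfold qbAlt
    rw [Finset.mul_sum]
    refine Finset.sum_congr rfl ?_
    intro j hj
    have hj' : j ≤ s := by simpa [Nat.lt_succ_iff] using hj
    have e1 : s + 1 - 1 - j = s - j := by omega
    have e2 : s - (s - j) = j := by omega
    rw [e1, e2, qb_symm q hq s j hj', neg_one_pow_sub hj']
    ring
  rw [hA]
  rcases Nat.eq_zero_or_pos s with rfl | hs
  · simp [qbAlt, tri, qPoch_zero]
  · rw [qbAlt_eq_zero q s hs, if_neg (by omega)]
    simp

/-- the key scalar identity for the q-exponential adjoint formula. -/
lemma key_coeff (X Y : ℕ) :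
    ∑ k ∈ Finset.range (min X Y + 1),
      ((-1:ℂ)^k * q ^ (tri k)) / (qPoch q (X-k) * qPoch q k * qPoch q (Y-k))
    = q ^ (X*Y) / (qPoch q X * qPoch q Y) := by
  have hsub : Finset.range (min X Y + 1) ⊆ Finset.range (X + 1) := by
    apply Finset.range_subset_range.2; omega
  have hT : ∑ k ∈ Finset.range (min X Y + 1),
      (-1 : ℂ)^k * q ^ (tri k) * qPoch q k * qb q X k * qb q Y k = q ^ (X*Y) := by
    rw [← qbT_eq q hq X Y]
    unfold qbT
    apply Finset.sum_subset hsub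
    intro k hk1 hk2
    have : Y < k := by
      simp only [Finset.mem_range] at hk1 hk2
      omega
    rw [qb_eq_zero_of_lt q this]
    ring
  have key : ∀ k ∈ Finset.range (min X Y + 1),
      ((-1:ℂ)^k * q ^ (tri k)) / (qPoch q (X-k) * qPoch q k * qPoch q (Y-k))
      = ((-1 : ℂ)^k * q ^ (tri k) * qPoch q k * qb q X k * qb q Y k) / (qPoch q X * qPoch q Y) := by
    intro k hk
    have hk' : k ≤ min X Y := by simpa [Nat.lt_succ_iff] using hk
    have h1 : qPoch q k * qPoch q (X - k) * qb q X k = qPoch q X :=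
      qb_mul_qPoch q X k (by omega)
    have h2 : qPoch q k * qPoch q (Y - k) * qb q Y k = qPoch q Y :=
      qb_mul_qPoch q Y k (by omega)
    rw [div_eq_div_iff
      (mul_ne_zero (mul_ne_zero (qPoch_ne_zero q hq _) (qPoch_ne_zero q hq _)) (qPoch_ne_zero q hq _))
      (mul_ne_zero (qPoch_ne_zero q hq _) (qPoch_ne_zero q hq _))]
    linear_combination (-((-1:ℂ)^k * q ^ (tri k) * qb q X k * qPoch q (X-k) * qPoch q k)) * h2
      - ((-1:ℂ)^k * q ^ (tri k) * qPoch q Y) * h1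
  rw [Finset.sum_congr rfl key, ← Finset.sum_div, hT]

/-! ### Operator layer -/

section Ops

omit hq

variable {N : ℕ}

local notation "V" => MvPowerSeries (ZMod N) ℂ

lemma smul_app (c : ℂ) (f : V) (ν : ZMod N →₀ ℕ) : (c • f) ν = c * f ν := rfl

lemma sum_app {ι : Type*} (s : Finset ι) (F : ι → V) (ν : ZMod N →₀ ℕ) :
    (∑ i ∈ s, F i) ν = ∑ i ∈ s, F i ν := by
  classical
  induction s using Finset.cons_induction with
  | empty => rfl
  | cons a s ha ih => rw [Finset.sum_cons, Finset.sum_cons, ← ih]; rfl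

/-- agreement of coefficients up to total degree `d`. -/
def Agree (d : ℕ) (f g : V) : Prop := ∀ μ : ZMod N →₀ ℕ, degOf μ ≤ d → f μ = g μ

lemma Agree.trans {d : ℕ} {f g h : V} (h1 : Agree d f g) (h2 : Agree d g h) : Agree d f h :=
  fun μ hμ => (h1 μ hμ).trans (h2 μ hμ)

/-- additivity and ℂ-homogeneity. -/
def Lin (T : V → V) : Prop :=
  (∀ f g, T (f + g) = T f + T g) ∧ ∀ (c : ℂ) (f), T (c • f) = c • T f

/-- strict locality: the output coefficient at `ν` only depends on input
coefficients of strictly smaller total degree. -/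
def SLoc (T : V → V) : Prop :=
  ∀ f g ν, (∀ μ, degOf μ < degOf ν → f μ = g μ) → T f ν = T g ν

/-- weak locality. -/
def WLoc (T : V → V) : Prop :=
  ∀ f g ν, (∀ μ, degOf μ ≤ degOf ν → f μ = g μ) → T f ν = T g ν

/-- degree-raising. -/
def Rais (T : V → V) : Prop :=
  ∀ (k : ℕ) f, (∀ μ, degOf μ < k → f μ = 0) → ∀ ν, degOf ν < k + 1 → T f ν = 0

lemma Lin.comp {T S : V → V} (hT : Lin T) (hS : Lin S) : Lin (T ∘ S) :=
  ⟨fun f g => by simp only [Function.comp_apply, hS.1, hT.1],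
   fun c f => by simp only [Function.comp_apply, hS.2, hT.2]⟩

lemma Lin.iterate {T : V → V} (hT : Lin T) (n : ℕ) : Lin (T^[n]) := by
  induction n with
  | zero => exact ⟨fun _ _ => rfl, fun _ _ => rfl⟩
  | succ n ih =>
      constructor
      · intro f g
        simp only [Function.iterate_succ_apply', ih.1, hT.1]
      · intro c f
        simp only [Function.iterate_succ_apply', ih.2, hT.2]

lemma Lin.map_zero {T : V → V} (hT : Lin T) : T 0 = 0 := by
  have := hT.2 0 0
  simpa using this

lemma Lin.map_sum {T : V → V} (hT : Lin T) {ι : Type*} (s : Finset ι) (F : ι → V) :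
    T (∑ i ∈ s, F i) = ∑ i ∈ s, T (F i) := by
  classical
  induction s using Finset.cons_induction with
  | empty => simpa using hT.map_zero
  | cons a s ha ih => rw [Finset.sum_cons, Finset.sum_cons, hT.1, ih]

lemma SLoc.comp {T S : V → V} (hT : SLoc T) (hS : SLoc S) : SLoc (T ∘ S) := by
  intro f g ν h
  exact hT _ _ ν fun μ hμ => hS _ _ μ fun τ hτ => h τ (lt_trans hτ hμ)

lemma SLoc.iterate_wloc {T : V → V} (hT : SLoc T) (n : ℕ) : WLoc (T^[n]) := by
  induction n with
  | zero => exact fun f g ν h => h ν le_rfl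
  | succ n ih =>
      intro f g ν h
      rw [Function.iterate_succ_apply', Function.iterate_succ_apply']
      exact hT _ _ ν fun μ hμ => ih _ _ μ fun τ hτ => h τ (le_trans hτ (le_of_lt hμ))

lemma WLoc.agree {T : V → V} (hT : WLoc T) {d : ℕ} {f g : V} (h : Agree d f g) :
    Agree d (T f) (T g) :=
  fun μ hμ => hT f g μ fun τ hτ => h τ (le_trans hτ hμ)

lemma Rais.comp {T S : V → V} (hT : Rais T) (hS : Rais S) : Rais (T ∘ S) := by
  intro k f hf ν hν
  rcases Nat.eq_or_lt_of_le hν with h | h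
  · exact hT (k+1) (S f) (fun μ hμ => hS k f hf μ hμ) ν (by omega)
  · exact hT (k+1) (S f) (fun μ hμ => hS k f hf μ hμ) ν (by omega)

lemma Rais.iterate_shift {T : V → V} (hT : Rais T) (k : ℕ) {f : V}
    (hf : ∀ μ, degOf μ < k → f μ = 0) :
    ∀ (n : ℕ) (μ : ZMod N →₀ ℕ), degOf μ < k + n → T^[n] f μ = 0 := by
  intro n
  induction n with
  | zero => intro μ hμ; exact hf μ (by omega)
  | succ n ih =>
      intro μ hμ
      rw [Function.iterate_succ_apply']
      exact hT (k + n) (T^[n] f) (fun τ hτ => ih τ hτ) μ (by omega)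

lemma Rais.iterate_vanish {T : V → V} (hT : Rais T) (n : ℕ) (f : V)
    (ν : ZMod N →₀ ℕ) (h : degOf ν < n) : T^[n] f ν = 0 :=
  hT.iterate_shift 0 (fun μ hμ => absurd hμ (by omega)) n ν (by omega)

lemma word_vanish {A B : V → V} (hA : Rais A) (hB : Rais B) (X Y : ℕ) (f : V)
    (ν : ZMod N →₀ ℕ) (h : degOf ν < X + Y) : B^[X] (A^[Y] f) ν = 0 :=
  hB.iterate_shift Y (fun μ hμ => hA.iterate_vanish Y f μ hμ) X ν (by omega)

/-- truncated q-exponential-type series. -/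
def ser (c : ℕ → ℂ) (T : V → V) (d : ℕ) : V → V :=
  fun f => ∑ n ∈ Finset.range (d+1), c n • T^[n] f

lemma ser_apply (c : ℕ → ℂ) (T : V → V) (d : ℕ) (f : V) (ν : ZMod N →₀ ℕ) :
    ser c T d f ν = ∑ n ∈ Finset.range (d+1), c n * (T^[n] f) ν := by
  rw [ser, sum_app]
  exact Finset.sum_congr rfl fun n _ => rfl

variable (q : ℂ)

/-- coefficients of `e_q(-T)`. -/
def cneg (n : ℕ) : ℂ := (-1 : ℂ)^n / qPoch q n

/-- coefficients of `E_q(T)`. -/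
def cpos (n : ℕ) : ℂ := q ^ (tri n) / qPoch q n

lemma eqExp_apply (T : V → V) (f : V) (ν : ZMod N →₀ ℕ) :
    eqExp q T f ν = ∑ n ∈ Finset.range (degOf ν + 1), cneg q n * (T^[n] f) ν := rfl

lemma EqExp_apply (T : V → V) (f : V) (ν : ZMod N →₀ ℕ) :
    EqExp q T f ν = ∑ n ∈ Finset.range (degOf ν + 1), cpos q n * (T^[n] f) ν := rfl

lemma eqExp_eval {T : V → V} (hT : Rais T) (f : V) (ν : ZMod N →₀ ℕ) {d : ℕ}
    (hd : degOf ν ≤ d) :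
    eqExp q T f ν = ∑ n ∈ Finset.range (d+1), cneg q n * (T^[n] f) ν := by
  rw [eqExp_apply]
  apply Finset.sum_subset (Finset.range_subset_range.2 (by omega))
  intro n _ hn
  rw [hT.iterate_vanish n f ν (by simp only [Finset.mem_range] at hn; omega), mul_zero]

lemma EqExp_eval {T : V → V} (hT : Rais T) (f : V) (ν : ZMod N →₀ ℕ) {d : ℕ}
    (hd : degOf ν ≤ d) :
    EqExp q T f ν = ∑ n ∈ Finset.range (d+1), cpos q n * (T^[n] f) ν := by
  rw [EqExp_apply]
  apply Finset.sum_subset (Finset.range_subset_range.2 (by omega))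
  intro n _ hn
  rw [hT.iterate_vanish n f ν (by simp only [Finset.mem_range] at hn; omega), mul_zero]

lemma eqExp_agree_ser {T : V → V} (hT : Rais T) (f : V) (d : ℕ) :
    Agree d (eqExp q T f) (ser (cneg q) T d f) :=
  fun μ hμ => by rw [eqExp_eval q hT f μ hμ, ser_apply]

lemma EqExp_agree_ser {T : V → V} (hT : Rais T) (f : V) (d : ℕ) :
    Agree d (EqExp q T f) (ser (cpos q) T d f) :=
  fun μ hμ => by rw [EqExp_eval q hT f μ hμ, ser_apply]

lemma ser_wloc (c : ℕ → ℂ) {T : V → V} (hT : SLoc T) (d : ℕ) : WLoc (ser c T d) := by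
  intro f g ν h
  rw [ser_apply, ser_apply]
  refine Finset.sum_congr rfl fun n _ => ?_
  rw [hT.iterate_wloc n f g ν h]

lemma eqExp_wloc {T : V → V} (hT : SLoc T) : WLoc (eqExp q T) := by
  intro f g ν h
  rw [eqExp_apply, eqExp_apply]
  refine Finset.sum_congr rfl fun n _ => ?_
  rw [hT.iterate_wloc n f g ν h]

/-- reindexing of a shifted truncated sum against a vanishing tail. -/
lemma shift_sum (d k : ℕ) (c w : ℕ → ℂ) (hw : ∀ Y, d < Y → w Y = 0) :
    ∑ m ∈ Finset.range (d+1), c m * w (k+m)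
      = ∑ Y ∈ Finset.range (d+1), (if k ≤ Y then c (Y-k) else 0) * w Y := by
  have hL : ∑ m ∈ Finset.range (d+1), c m * w (k+m)
      = ∑ m ∈ Finset.range (d+1-k), c m * w (k+m) := by
    symm
    apply Finset.sum_subset (Finset.range_subset_range.2 (by omega))
    intro m _ hm
    simp only [Finset.mem_range] at hm
    rw [hw (k+m) (by omega), mul_zero]
  have hR : ∑ Y ∈ Finset.range (d+1), (if k ≤ Y then c (Y-k) else 0) * w Y
      = ∑ Y ∈ Finset.Ico k (d+1), c (Y-k) * w Y := by
    rw [Finset.range_eq_Ico]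
    rcases le_or_gt k (d+1) with hk | hk
    · rw [← Finset.sum_Ico_consecutive _ (Nat.zero_le k) hk]
      have h1 : ∑ Y ∈ Finset.Ico 0 k, (if k ≤ Y then c (Y-k) else 0) * w Y = 0 := by
        apply Finset.sum_eq_zero
        intro Y hY
        simp only [Finset.mem_Ico] at hY
        rw [if_neg (by omega), zero_mul]
      have h2 : ∑ Y ∈ Finset.Ico k (d+1), (if k ≤ Y then c (Y-k) else 0) * w Y
          = ∑ Y ∈ Finset.Ico k (d+1), c (Y-k) * w Y := by
        refine Finset.sum_congr rfl fun Y hY => ?_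
        simp only [Finset.mem_Ico] at hY
        rw [if_pos hY.1]
      rw [h1, h2, zero_add]
    · have h1 : Finset.Ico k (d+1) = ∅ := Finset.Ico_eq_empty (by omega)
      rw [h1, Finset.sum_empty]
      apply Finset.sum_eq_zero
      intro Y hY
      simp only [Finset.mem_Ico] at hY
      rw [if_neg (by omega), zero_mul]
  rw [hL, hR, Finset.sum_Ico_eq_sum_range]
  exact Finset.sum_congr rfl fun m hm => by rw [Nat.add_sub_cancel_left]

/-! ### normal ordering -/

variable {A B : MvPowerSeries (ZMod N) ℂ → MvPowerSeries (ZMod N) ℂ}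

lemma no1 (hLB : Lin B) (hAB : ∀ f, A (B f) = q • B (A f)) (n : ℕ) (f : V) :
    A (B^[n] f) = q^n • B^[n] (A f) := by
  induction n generalizing f with
  | zero => simp
  | succ n ih =>
      rw [Function.iterate_succ_apply, ih (B f), hAB f, (hLB.iterate n).2,
        Function.iterate_succ_apply, smul_smul, pow_succ]

lemma no2 (hLA : Lin A) (hLB : Lin B) (hAB : ∀ f, A (B f) = q • B (A f)) (m n : ℕ) (f : V) :
    A^[m] (B^[n] f) = q^(m*n) • B^[n] (A^[m] f) := by
  induction m generalizing f with
  | zero => simp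
  | succ m ih =>
      rw [Function.iterate_succ_apply, no1 q hLB hAB n f, (hLA.iterate m).2, ih (A f),
        smul_smul, ← Function.iterate_succ_apply, ← pow_add]
      congr 2
      ring

lemma no3 (hLA : Lin A) (hLB : Lin B) (hAB : ∀ f, A (B f) = q • B (A f)) (k : ℕ) (f : V) :
    (B ∘ A)^[k] f = q^(tri k) • B^[k] (A^[k] f) := by
  induction k generalizing f with
  | zero => simp [tri]
  | succ k ih =>
      rw [Function.iterate_succ_apply, Function.comp_apply, ih (B (A f))]
      have h1 : A^[k] (B (A f)) = q^k • B (A^[k] (A f)) := by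
        have h := no2 q hLA hLB hAB k 1 (A f)
        simpa using h
      rw [h1, (hLB.iterate k).2, smul_smul, ← pow_add,
        ← Function.iterate_succ_apply B k, ← Function.iterate_succ_apply A k]
      congr 1
      rw [tri_succ]

/-! ### the three operator identities -/

lemma euler_op (hq : ∀ n : ℕ, 0 < n → q ^ n ≠ 1)
    (hLA : Lin A) (hSA : SLoc A) (hRA : Rais A) (f : V) :
    eqExp q A (EqExp q A f) = f := by
  funext ν
  set d := degOf ν with hd
  set w : ℕ → ℂ := fun s => (A^[s] f) ν with hw
  have hwv : ∀ s, d < s → w s = 0 := fun s hs => hRA.iterate_vanish s f ν hs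
  have step1 : ∀ m, (A^[m] (EqExp q A f)) ν = ∑ n ∈ Finset.range (d+1), cpos q n * w (m+n) := by
    intro m
    have hag : (A^[m] (EqExp q A f)) ν = (A^[m] (ser (cpos q) A d f)) ν :=
      (hSA.iterate_wloc m) _ _ ν fun μ hμ => EqExp_agree_ser q hRA f d μ hμ
    rw [hag, ser, (hLA.iterate m).map_sum, sum_app]
    refine Finset.sum_congr rfl fun n _ => ?_
    rw [(hLA.iterate m).2, smul_app, ← Function.iterate_add_apply]
  have main : eqExp q A (EqExp q A f) ν
      = ∑ m ∈ Finset.range (d+1), cneg q m * ∑ n ∈ Finset.range (d+1), cpos q n * w (m+n) := by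
    rw [eqExp_apply]
    exact Finset.sum_congr rfl fun m _ => by rw [step1]
  rw [main]
  have shift : ∀ m, ∑ n ∈ Finset.range (d+1), cpos q n * w (m+n)
      = ∑ Y ∈ Finset.range (d+1), (if m ≤ Y then cpos q (Y-m) else 0) * w Y :=
    fun m => shift_sum d m (cpos q) w hwv
  calc ∑ m ∈ Finset.range (d+1), cneg q m * ∑ n ∈ Finset.range (d+1), cpos q n * w (m+n)
      = ∑ m ∈ Finset.range (d+1), ∑ Y ∈ Finset.range (d+1),
          cneg q m * ((if m ≤ Y then cpos q (Y-m) else 0) * w Y) := by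
        refine Finset.sum_congr rfl fun m _ => ?_
        rw [shift m, Finset.mul_sum]
    _ = ∑ Y ∈ Finset.range (d+1),
          (∑ m ∈ Finset.range (d+1), cneg q m * (if m ≤ Y then cpos q (Y-m) else 0)) * w Y := by
        rw [Finset.sum_comm]
        refine Finset.sum_congr rfl fun Y _ => ?_
        rw [Finset.sum_mul]
        exact Finset.sum_congr rfl fun m _ => by ring
    _ = ∑ Y ∈ Finset.range (d+1), (if Y = 0 then 1 else 0) * w Y := by
        refine Finset.sum_congr rfl fun Y hY => ?_
        simp only [Finset.mem_range] at hY
        congr 1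
        have trunc : ∑ m ∈ Finset.range (d+1), cneg q m * (if m ≤ Y then cpos q (Y-m) else 0)
            = ∑ m ∈ Finset.range (Y+1), cneg q m * (if m ≤ Y then cpos q (Y-m) else 0) := by
          symm
          apply Finset.sum_subset (Finset.range_subset_range.2 (by omega))
          intro m _ hm
          simp only [Finset.mem_range] at hm
          rw [if_neg (by omega), mul_zero]
        rw [trunc, ← euler_coeff q hq Y]
        refine Finset.sum_congr rfl fun m hm => ?_
        simp only [Finset.mem_range] at hm
        rw [if_pos (by omega)]
        rfl
    _ = w 0 := by
        rw [Finset.sum_eq_single_of_mem 0 (Finset.mem_range.2 (by omega))]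
        · simp
        · intro Y _ hY
          rw [if_neg hY, zero_mul]

lemma iter_exp_apply (hLA : Lin A) (hSA : SLoc A) (hRB : Rais B) (m : ℕ) (f : V)
    (ν : ZMod N →₀ ℕ) {d : ℕ} (hd : degOf ν ≤ d) :
    (A^[m] (eqExp q B f)) ν = ∑ n ∈ Finset.range (d+1), cneg q n * (A^[m] (B^[n] f)) ν := by
  have hag : (A^[m] (eqExp q B f)) ν = (A^[m] (ser (cneg q) B d f)) ν :=
    (hSA.iterate_wloc m) _ _ ν fun μ hμ => eqExp_agree_ser q hRB f d μ (le_trans hμ hd)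
  rw [hag, ser, (hLA.iterate m).map_sum, sum_app]
  refine Finset.sum_congr rfl fun n _ => ?_
  rw [(hLA.iterate m).2, smul_app]

lemma comm_op (hLA : Lin A) (hLB : Lin B) (hSA : SLoc A) (hSB : SLoc B)
    (hRA : Rais A) (hRB : Rais B) (hAB : ∀ f, A (B f) = B (A f)) (f : V) (ν : ZMod N →₀ ℕ) :
    eqExp q A (eqExp q B f) ν = eqExp q B (eqExp q A f) ν := by
  set d := degOf ν with hdd
  have hc1 : ∀ (n : ℕ) (g : V), A (B^[n] g) = B^[n] (A g) := by
    intro n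
    induction n with
    | zero => intro g; rfl
    | succ n ih => intro g; rw [Function.iterate_succ_apply, ih (B g), hAB g,
        Function.iterate_succ_apply]
  have hc2 : ∀ (m n : ℕ) (g : V), A^[m] (B^[n] g) = B^[n] (A^[m] g) := by
    intro m
    induction m with
    | zero => intro n g; rfl
    | succ m ih => intro n g; rw [Function.iterate_succ_apply, hc1 n g, ih,
        ← Function.iterate_succ_apply]
  rw [eqExp_apply, eqExp_apply]
  have e1 : ∀ m ∈ Finset.range (d+1), cneg q m * (A^[m] (eqExp q B f)) ν
      = ∑ n ∈ Finset.range (d+1), cneg q m * (cneg q n * (B^[n] (A^[m] f)) ν) := by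
    intro m _
    rw [iter_exp_apply (d := d) q hLA hSA hRB m f ν le_rfl, Finset.mul_sum]
    refine Finset.sum_congr rfl fun n _ => ?_
    rw [hc2 m n f]
  have e2 : ∀ n ∈ Finset.range (d+1), cneg q n * (B^[n] (eqExp q A f)) ν
      = ∑ m ∈ Finset.range (d+1), cneg q n * (cneg q m * (B^[n] (A^[m] f)) ν) := by
    intro n _
    rw [iter_exp_apply (d := d) q hLB hSB hRA n f ν le_rfl, Finset.mul_sum]
  rw [Finset.sum_congr rfl e1, Finset.sum_congr rfl e2, Finset.sum_comm]
  refine Finset.sum_congr rfl fun n _ => Finset.sum_congr rfl fun m _ => by ring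

lemma key_coeff' (hq : ∀ n : ℕ, 0 < n → q ^ n ≠ 1) (X Y : ℕ) :
    ∑ k ∈ Finset.range (min X Y + 1),
      (cneg q k * q ^ (tri k)) * (cneg q (X-k) * cneg q (Y-k))
    = cneg q X * cneg q Y * q ^ (X*Y) := by
  have h := key_coeff q hq X Y
  have e1 : ∀ k ∈ Finset.range (min X Y + 1),
      (cneg q k * q ^ (tri k)) * (cneg q (X-k) * cneg q (Y-k))
      = ((-1:ℂ)^X * (-1)^Y) *
          (((-1:ℂ)^k * q ^ (tri k)) / (qPoch q (X-k) * qPoch q k * qPoch q (Y-k))) := by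
    intro k hk
    simp only [Finset.mem_range] at hk
    have hkX : k ≤ X := by omega
    have hkY : k ≤ Y := by omega
    simp only [cneg]
    rw [neg_one_pow_sub hkX, neg_one_pow_sub hkY]
    have hsq : ((-1:ℂ)^k) * ((-1)^k) = 1 := by
      rw [← pow_add, ← two_mul, pow_mul]
      simp
    linear_combination ((-1:ℂ)^X * (-1)^Y * q^(tri k) * (-1)^k /
      (qPoch q k * qPoch q (X-k) * qPoch q (Y-k))) * hsq
  rw [Finset.sum_congr rfl e1, ← Finset.mul_sum, h]
  simp only [cneg]
  ring

lemma key_op (hq : ∀ n : ℕ, 0 < n → q ^ n ≠ 1)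
    (hLA : Lin A) (hLB : Lin B) (hSA : SLoc A) (hSB : SLoc B)
    (hRA : Rais A) (hRB : Rais B) (hAB : ∀ f, A (B f) = q • B (A f))
    (f : V) (ν : ZMod N →₀ ℕ) :
    eqExp q A (eqExp q B f) ν = eqExp q B (eqExp q (B ∘ A) (eqExp q A f)) ν := by
  classical
  set d := degOf ν with hdd
  have hRBA : Rais (B ∘ A) := hRB.comp hRA
  have hSBA : SLoc (B ∘ A) := hSB.comp hSA
  have hLBA : Lin (B ∘ A) := hLB.comp hLA
  set w : ℕ → ℕ → ℂ := fun X Y => (B^[X] (A^[Y] f)) ν with hwdef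
  have hw : ∀ X Y, d < X + Y → w X Y = 0 := fun X Y h => word_vanish hRA hRB X Y f ν h
  -- left hand side
  have hL : eqExp q A (eqExp q B f) ν
      = ∑ X ∈ Finset.range (d+1), ∑ Y ∈ Finset.range (d+1),
          (cneg q X * cneg q Y * q^(X*Y)) * w X Y := by
    rw [eqExp_apply]
    have e1 : ∀ m ∈ Finset.range (d+1), cneg q m * (A^[m] (eqExp q B f)) ν
        = ∑ n ∈ Finset.range (d+1), cneg q m * (cneg q n * (q^(n*m) * w n m)) := by
      intro m _
      rw [iter_exp_apply (d := d) q hLA hSA hRB m f ν le_rfl, Finset.mul_sum]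
      refine Finset.sum_congr rfl fun n _ => ?_
      rw [no2 q hLA hLB hAB m n f, smul_app]
      have hmn : m * n = n * m := Nat.mul_comm m n
      rw [hmn]
    rw [Finset.sum_congr rfl e1, Finset.sum_comm]
    refine Finset.sum_congr rfl fun X _ => Finset.sum_congr rfl fun Y _ => by ring
  -- right hand side
  have hstep : ∀ n ∈ Finset.range (d+1),
      cneg q n * (B^[n] (eqExp q (B ∘ A) (eqExp q A f))) ν
      = ∑ k ∈ Finset.range (d+1), cneg q n * (cneg q k * (q^(tri k) *
          ∑ m ∈ Finset.range (d+1), cneg q m * w (n+k) (k+m))) := by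
    intro n _
    have hZ : Agree d (eqExp q (B ∘ A) (eqExp q A f))
        (ser (cneg q) (B ∘ A) d (ser (cneg q) A d f)) :=
      Agree.trans (eqExp_agree_ser q hRBA _ d)
        ((ser_wloc (cneg q) hSBA d).agree (eqExp_agree_ser q hRA f d))
    have h1 : (B^[n] (eqExp q (B ∘ A) (eqExp q A f))) ν
        = (B^[n] (ser (cneg q) (B ∘ A) d (ser (cneg q) A d f))) ν :=
      (hSB.iterate_wloc n) _ _ ν fun μ hμ => hZ μ hμ
    rw [h1, ser, (hLB.iterate n).map_sum, sum_app, Finset.mul_sum]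
    refine Finset.sum_congr rfl fun k _ => ?_
    congr 1
    rw [(hLB.iterate n).2, smul_app]
    congr 1
    have h2 : (B ∘ A)^[k] (ser (cneg q) A d f)
        = ∑ m ∈ Finset.range (d+1), cneg q m • (q^(tri k) • B^[k] (A^[k+m] f)) := by
      rw [ser, (hLBA.iterate k).map_sum]
      refine Finset.sum_congr rfl fun m _ => ?_
      rw [(hLBA.iterate k).2, no3 q hLA hLB hAB k, ← Function.iterate_add_apply]
    rw [h2, (hLB.iterate n).map_sum, sum_app, Finset.mul_sum]
    refine Finset.sum_congr rfl fun m _ => ?_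
    rw [(hLB.iterate n).2, smul_app, (hLB.iterate n).2, smul_app,
      ← Function.iterate_add_apply]
    show cneg q m * (q^(tri k) * w (n+k) (k+m)) = q^(tri k) * (cneg q m * w (n+k) (k+m))
    ring
  have hR : eqExp q B (eqExp q (B ∘ A) (eqExp q A f)) ν
      = ∑ X ∈ Finset.range (d+1), ∑ Y ∈ Finset.range (d+1),
          (∑ k ∈ Finset.range (d+1), (cneg q k * q^(tri k)) *
            ((if k ≤ X then cneg q (X-k) else 0) * (if k ≤ Y then cneg q (Y-k) else 0)))
          * w X Y := by
    rw [eqExp_apply, Finset.sum_congr rfl hstep]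
    -- shift the m-sum
    have sh1 : ∀ n k, ∑ m ∈ Finset.range (d+1), cneg q m * w (n+k) (k+m)
        = ∑ Y ∈ Finset.range (d+1), (if k ≤ Y then cneg q (Y-k) else 0) * w (n+k) Y :=
      fun n k => shift_sum d k (cneg q) (fun Y => w (n+k) Y)
        (fun Y hY => hw (n+k) Y (by omega))
    -- shift the n-sum
    have sh2 : ∀ k Y, ∑ n ∈ Finset.range (d+1), cneg q n * w (n+k) Y
        = ∑ X ∈ Finset.range (d+1), (if k ≤ X then cneg q (X-k) else 0) * w X Y := by
      intro k Y
      have : ∀ n, w (n+k) Y = w (k+n) Y := fun n => by rw [Nat.add_comm]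
      calc ∑ n ∈ Finset.range (d+1), cneg q n * w (n+k) Y
          = ∑ n ∈ Finset.range (d+1), cneg q n * w (k+n) Y :=
            Finset.sum_congr rfl fun n _ => by rw [this n]
        _ = _ := shift_sum d k (cneg q) (fun X => w X Y) (fun X hX => hw X Y (by omega))
    calc ∑ n ∈ Finset.range (d+1), ∑ k ∈ Finset.range (d+1),
            cneg q n * (cneg q k * (q^(tri k) * ∑ m ∈ Finset.range (d+1), cneg q m * w (n+k) (k+m)))
        = ∑ k ∈ Finset.range (d+1), ∑ Y ∈ Finset.range (d+1),
            (cneg q k * q^(tri k)) * ((if k ≤ Y then cneg q (Y-k) else 0) *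
              ∑ n ∈ Finset.range (d+1), cneg q n * w (n+k) Y) := by
          rw [Finset.sum_comm]
          refine Finset.sum_congr rfl fun k _ => ?_
          calc ∑ n ∈ Finset.range (d+1),
                cneg q n * (cneg q k * (q^(tri k) * ∑ m ∈ Finset.range (d+1), cneg q m * w (n+k) (k+m)))
              = ∑ n ∈ Finset.range (d+1), ∑ Y ∈ Finset.range (d+1),
                  (cneg q k * q^(tri k)) * ((if k ≤ Y then cneg q (Y-k) else 0) *
                    (cneg q n * w (n+k) Y)) := by
                refine Finset.sum_congr rfl fun n _ => ?_
                rw [sh1 n k, Finset.mul_sum, Finset.mul_sum, Finset.mul_sum]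
                refine Finset.sum_congr rfl fun Y _ => by ring
            _ = _ := by
                rw [Finset.sum_comm]
                refine Finset.sum_congr rfl fun Y _ => ?_
                rw [Finset.mul_sum, Finset.mul_sum]
      _ = ∑ k ∈ Finset.range (d+1), ∑ Y ∈ Finset.range (d+1), ∑ X ∈ Finset.range (d+1),
            (cneg q k * q^(tri k)) * ((if k ≤ Y then cneg q (Y-k) else 0) *
              ((if k ≤ X then cneg q (X-k) else 0) * w X Y)) := by
          refine Finset.sum_congr rfl fun k _ => Finset.sum_congr rfl fun Y _ => ?_
          rw [sh2 k Y, Finset.mul_sum, Finset.mul_sum]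
      _ = ∑ X ∈ Finset.range (d+1), ∑ Y ∈ Finset.range (d+1), ∑ k ∈ Finset.range (d+1),
            (cneg q k * q^(tri k)) * ((if k ≤ Y then cneg q (Y-k) else 0) *
              ((if k ≤ X then cneg q (X-k) else 0) * w X Y)) := by
          rw [Finset.sum_comm]
          rw [show (∑ Y ∈ Finset.range (d+1), ∑ k ∈ Finset.range (d+1), ∑ X ∈ Finset.range (d+1),
            (cneg q k * q^(tri k)) * ((if k ≤ Y then cneg q (Y-k) else 0) *
              ((if k ≤ X then cneg q (X-k) else 0) * w X Y)))
            = ∑ Y ∈ Finset.range (d+1), ∑ X ∈ Finset.range (d+1), ∑ k ∈ Finset.range (d+1),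
            (cneg q k * q^(tri k)) * ((if k ≤ Y then cneg q (Y-k) else 0) *
              ((if k ≤ X then cneg q (X-k) else 0) * w X Y))
            from Finset.sum_congr rfl fun Y _ => Finset.sum_comm]
          exact Finset.sum_comm
      _ = _ := by
          refine Finset.sum_congr rfl fun X _ => Finset.sum_congr rfl fun Y _ => ?_
          rw [Finset.sum_mul]
          exact Finset.sum_congr rfl fun k _ => by ring
  -- compare coefficients
  rw [hL, hR]
  refine Finset.sum_congr rfl fun X hX => Finset.sum_congr rfl fun Y hY => ?_
  simp only [Finset.mem_range] at hX hY
  congr 1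
  have trunc : ∑ k ∈ Finset.range (d+1), (cneg q k * q^(tri k)) *
      ((if k ≤ X then cneg q (X-k) else 0) * (if k ≤ Y then cneg q (Y-k) else 0))
      = ∑ k ∈ Finset.range (min X Y + 1), (cneg q k * q^(tri k)) *
      ((if k ≤ X then cneg q (X-k) else 0) * (if k ≤ Y then cneg q (Y-k) else 0)) := by
    symm
    apply Finset.sum_subset (Finset.range_subset_range.2 (by omega))
    intro k _ hk
    simp only [Finset.mem_range] at hk
    by_cases h1 : k ≤ X
    · rw [if_neg (show ¬ k ≤ Y by omega)]
      ring
    · rw [if_neg h1]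
      ring
  rw [trunc, ← key_coeff' q hq X Y]
  refine Finset.sum_congr rfl fun k hk => ?_
  simp only [Finset.mem_range] at hk
  rw [if_pos (by omega), if_pos (by omega)]

/-! ### the concrete operators -/

/-- `ν - e_i`. -/
def subS (ν : ZMod N →₀ ℕ) (i : ZMod N) : ZMod N →₀ ℕ := ν - Finsupp.single i 1

lemma subS_apply (ν : ZMod N →₀ ℕ) (i j : ZMod N) :
    subS ν i j = ν j - (if i = j then 1 else 0) := by
  unfold subS
  rw [Finsupp.tsub_apply, Finsupp.single_apply]

lemma subS_apply_cast (ν : ZMod N →₀ ℕ) (i j : ZMod N) (h : i = j → ν j ≠ 0) :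
    ((subS ν i j : ℕ) : ℤ) = (ν j : ℤ) - (if i = j then 1 else 0) := by
  rw [subS_apply]
  split_ifs with h'
  · have := h h'
    have h1 : (1:ℕ) ≤ ν j := by omega
    push_cast [Nat.cast_sub h1]
    ring
  · rw [Nat.sub_zero]
    push_cast
    ring

lemma subS_apply_ne (ν : ZMod N →₀ ℕ) {i j : ZMod N} (h : i ≠ j) :
    subS ν i j = ν j := by
  rw [subS_apply, if_neg h, Nat.sub_zero]

lemma degOf_add_single (ν : ZMod N →₀ ℕ) (i : ZMod N) :
    degOf (ν + Finsupp.single i 1) = degOf ν + 1 := by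
  unfold degOf
  rw [Finsupp.sum_add_index' (fun _ => rfl) (fun _ _ _ => rfl), Finsupp.sum_single_index]
  rfl

lemma subS_add_single (ν : ZMod N →₀ ℕ) (i : ZMod N) (h : ν i ≠ 0) :
    subS ν i + Finsupp.single i 1 = ν := by
  apply tsub_add_cancel_of_le
  rw [Finsupp.single_le_iff]
  omega

lemma degOf_subS (ν : ZMod N →₀ ℕ) (i : ZMod N) (h : ν i ≠ 0) :
    degOf (subS ν i) + 1 = degOf ν := by
  conv_rhs => rw [← subS_add_single ν i h]
  rw [degOf_add_single]

lemma subS_subS (ν : ZMod N →₀ ℕ) (i j : ZMod N) :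
    subS (subS ν i) j = subS (subS ν j) i := by
  unfold subS
  rw [tsub_tsub, tsub_tsub, add_comm]

lemma xcheck_apply (i : ZMod N) (f : V) (ν : ZMod N →₀ ℕ) :
    xcheck q i f ν = if ν i = 0 then 0 else
      q ^ (-((subS ν i i : ℕ) : ℤ)) * (q ^ (subS ν i (i-1)) * f (subS ν i)) := by
  show ((MvPowerSeries.X i * pinv q i (pmap q (i-1) f) : MvPowerSeries (ZMod N) ℂ)) ν = _
  have h := MvPowerSeries.coeff_monomial_mul (R := ℂ) (m := ν)
    (n := Finsupp.single i 1) (φ := pinv q i (pmap q (i-1) f)) 1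
  rw [← MvPowerSeries.X_def] at h
  have hle : Finsupp.single i 1 ≤ ν ↔ ¬ (ν i = 0) := by
    rw [Finsupp.single_le_iff]
    omega
  have hco : MvPowerSeries.coeff ν (MvPowerSeries.X i * pinv q i (pmap q (i-1) f))
      = ((MvPowerSeries.X i * pinv q i (pmap q (i-1) f) : MvPowerSeries (ZMod N) ℂ)) ν := rfl
  rw [hco] at h
  rw [h]
  by_cases h0 : ν i = 0
  · rw [if_neg (by rw [hle]; omega), if_pos h0]
  · rw [if_pos (hle.2 h0), if_neg h0, one_mul]
    rfl

lemma xcheck_lin (i : ZMod N) : Lin (xcheck q i) := by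
  constructor
  · intro f g
    funext ν
    show xcheck q i (f + g) ν = xcheck q i f ν + xcheck q i g ν
    rw [xcheck_apply, xcheck_apply, xcheck_apply]
    split_ifs with h
    · rw [add_zero]
    · show _ * (_ * (f (subS ν i) + g (subS ν i))) = _
      ring
  · intro c f
    funext ν
    show xcheck q i (c • f) ν = c * xcheck q i f ν
    rw [xcheck_apply, xcheck_apply]
    split_ifs with h
    · rw [mul_zero]
    · show _ * (_ * (c * f (subS ν i))) = _
      ring

lemma xcheck_sloc (i : ZMod N) : SLoc (xcheck q i) := by
  intro f g ν h
  rw [xcheck_apply, xcheck_apply]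
  split_ifs with h0
  · rfl
  · have hd := degOf_subS ν i h0
    rw [h _ (by omega)]

lemma xcheck_rais (i : ZMod N) : Rais (xcheck q i) := by
  intro k f hf ν hν
  rw [xcheck_apply]
  split_ifs with h0
  · rfl
  · have hd := degOf_subS ν i h0
    rw [hf _ (by omega), mul_zero, mul_zero]

lemma zpow_mul_eq_zpow_mul {E1 E2 : ℤ} (v : ℂ) (h : E1 = E2) : q^E1 * v = q^E2 * v := by
  rw [h]

lemma zpow_mul_eq_q_zpow_mul (hq0 : q ≠ 0) {E1 E2 : ℤ} (v : ℂ) (h : E1 = 1 + E2) :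
    q^E1 * v = q * (q^E2 * v) := by
  rw [h, zpow_add₀ hq0, zpow_one]
  ring

lemma zpow4 (hq0 : q ≠ 0) (x y z w : ℤ) (v : ℂ) :
    q^x * (q^y * (q^z * (q^w * v))) = q^(x+y+z+w) * v := by
  rw [zpow_add₀ hq0, zpow_add₀ hq0, zpow_add₀ hq0]
  ring

/-- core commutation computation for `x̌_i x̌_j`. -/
lemma xcheck_comm_core (hq0 : q ≠ 0) (i j : ZMod N)
    (h1 : i ≠ j) (h3 : j - 1 ≠ i) (h4 : i - 1 ≠ i) (h5 : j - 1 ≠ j) (f : V) :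
    xcheck q i (xcheck q j f) = (if i - 1 = j then q else 1) • xcheck q j (xcheck q i f) := by
  funext ν
  show _ = (if i - 1 = j then q else 1) * xcheck q j (xcheck q i f) ν
  rw [xcheck_apply q i _ ν, xcheck_apply q j _ ν,
      xcheck_apply q j f (subS ν i), xcheck_apply q i f (subS ν j),
      subS_apply_ne ν h1, subS_apply_ne ν (Ne.symm h1)]
  by_cases hvi : ν i = 0
  · rw [if_pos hvi, if_pos hvi]
    split_ifs <;> ring
  · by_cases hvj : ν j = 0
    · rw [if_pos hvj, if_neg hvi, if_pos hvj]
      split_ifs <;> ring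
    · rw [if_neg hvi, if_neg hvj, if_neg hvi, if_neg hvj]
      rw [subS_subS ν j i]
      -- convert natural powers to integer powers
      rw [← zpow_natCast q (subS ν i (i-1)), ← zpow_natCast q (subS ν j (j-1)),
          ← zpow_natCast q (subS (subS ν i) j (j-1)), ← zpow_natCast q (subS (subS ν i) j (i-1))]
      rw [zpow4 q hq0, zpow4 q hq0]
      have ca1 : ((subS ν i i : ℕ) : ℤ) = (ν i : ℤ) - 1 := by
        rw [subS_apply_cast ν i i (fun _ => hvi), if_pos rfl]
      have cb1 : subS ν i (i-1) = ν (i-1) := subS_apply_ne ν (Ne.symm h4)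
      have ca2 : ((subS (subS ν i) j j : ℕ) : ℤ) = (ν j : ℤ) - 1 := by
        rw [subS_apply_cast (subS ν i) j j
          (fun _ => by rw [subS_apply_ne ν h1]; exact hvj), if_pos rfl, subS_apply_ne ν h1]
      have cb2 : subS (subS ν i) j (j-1) = ν (j-1) := by
        rw [subS_apply_ne (subS ν i) (Ne.symm h5), subS_apply_ne ν (Ne.symm h3)]
      have ca3 : ((subS ν j j : ℕ) : ℤ) = (ν j : ℤ) - 1 := by
        rw [subS_apply_cast ν j j (fun _ => hvj), if_pos rfl]
      have cb3 : subS ν j (j-1) = ν (j-1) := subS_apply_ne ν (Ne.symm h5)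
      have ca4 : ((subS (subS ν i) j i : ℕ) : ℤ) = (ν i : ℤ) - 1 := by
        rw [subS_apply_ne (subS ν i) (Ne.symm h1), ca1]
      have cb4 : ((subS (subS ν i) j (i-1) : ℕ) : ℤ)
          = (ν (i-1) : ℤ) - (if j = i - 1 then 1 else 0) := by
        rw [subS_apply_cast (subS ν i) j (i-1)
          (fun h => by rw [subS_apply_ne ν (Ne.symm h4), ← h]; exact hvj),
          subS_apply_ne ν (Ne.symm h4)]
      rcases eq_or_ne (i - 1) j with hd | hd
      · rw [if_pos hd]
        apply zpow_mul_eq_q_zpow_mul q hq0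
        rw [ca1, ca2, ca3, ca4, cb1, cb2, cb3, cb4, if_pos hd.symm]
        omega
      · rw [if_neg hd, one_mul]
        apply zpow_mul_eq_zpow_mul q
        rw [ca1, ca2, ca3, ca4, cb1, cb2, cb3, cb4, if_neg (fun h => hd h.symm)]
        omega

/-! ### assembly -/

lemma cast_ne_of (hN : 3 ≤ N) {a b : ℕ} (ha : a < N) (hb : b < N) (hab : a ≠ b) :
    (a : ZMod N) ≠ (b : ZMod N) := by
  intro h
  rw [ZMod.natCast_eq_natCast_iff, Nat.ModEq, Nat.mod_eq_of_lt ha, Nat.mod_eq_of_lt hb] at h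
  exact hab h

lemma one_sub_ne (hN : 3 ≤ N) (i : ZMod N) : i - 1 ≠ i := by
  intro h
  have h1 : (1 : ZMod N) = 0 := by linear_combination -h
  have h2 := cast_ne_of (N := N) hN (a := 1) (b := 0) (by omega) (by omega) (by omega)
  push_cast at h2
  exact h2 h1

lemma comm_far (hq0 : q ≠ 0) (hN : 3 ≤ N) {a b : ℕ} (hb2 : b + 2 ≤ a) (ha : a ≤ N - 2)
    (f : V) :
    xcheck q (a : ZMod N) (xcheck q (b : ZMod N) f)
      = xcheck q (b : ZMod N) (xcheck q (a : ZMod N) f) := by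
  have h1 : (a : ZMod N) ≠ (b : ZMod N) := cast_ne_of hN (by omega) (by omega) (by omega)
  have h3 : (b : ZMod N) - 1 ≠ (a : ZMod N) := by
    intro h
    have hb : (b : ZMod N) = ((a + 1 : ℕ) : ZMod N) := by
      push_cast
      linear_combination h
    exact cast_ne_of hN (by omega) (by omega) (by omega) hb
  have hδ : ¬ ((a : ZMod N) - 1 = (b : ZMod N)) := by
    intro h
    have hc : ((a - 1 : ℕ) : ZMod N) = (b : ZMod N) := by
      rw [Nat.cast_sub (by omega : 1 ≤ a), Nat.cast_one]
      exact h
    exact cast_ne_of hN (by omega) (by omega) (by omega) hc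
  have := xcheck_comm_core q hq0 (a : ZMod N) (b : ZMod N) h1 h3
    (one_sub_ne hN _) (one_sub_ne hN _) f
  rw [this, if_neg hδ, one_smul]

lemma comm_adj (hq0 : q ≠ 0) (hN : 3 ≤ N) {a : ℕ} (ha : a + 1 ≤ N - 2) (f : V) :
    xcheck q ((a + 1 : ℕ) : ZMod N) (xcheck q (a : ZMod N) f)
      = q • xcheck q (a : ZMod N) (xcheck q ((a + 1 : ℕ) : ZMod N) f) := by
  have h1 : ((a + 1 : ℕ) : ZMod N) ≠ (a : ZMod N) := cast_ne_of hN (by omega) (by omega) (by omega)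
  have h3 : (a : ZMod N) - 1 ≠ ((a + 1 : ℕ) : ZMod N) := by
    intro h
    have hb : ((a : ℕ) : ZMod N) = ((a + 2 : ℕ) : ZMod N) := by
      push_cast
      push_cast at h
      linear_combination h
    exact cast_ne_of hN (by omega) (by omega) (by omega) hb
  have hδ : ((a + 1 : ℕ) : ZMod N) - 1 = (a : ZMod N) := by
    push_cast
    ring
  have := xcheck_comm_core q hq0 ((a + 1 : ℕ) : ZMod N) (a : ZMod N) h1 h3
    (one_sub_ne hN _) (one_sub_ne hN _) f
  rw [this, if_pos hδ]

/-- the ascending word `x̌_0 ∘ x̌_1 ∘ ⋯`. -/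
local notation "Pw" t => compAsc (fun m => xcheck q ((m : ℕ) : ZMod N)) t

lemma P_lin : ∀ t : ℕ, Lin (Pw t) := by
  intro t
  induction t with
  | zero => exact ⟨fun _ _ => rfl, fun _ _ => rfl⟩
  | succ t ih => exact ih.comp (xcheck_lin q _)

lemma P_sloc : ∀ t : ℕ, SLoc (Pw (t+1)) := by
  intro t
  induction t with
  | zero =>
      intro f g ν h
      exact xcheck_sloc q _ f g ν h
  | succ t ih => exact ih.comp (xcheck_sloc q _)

lemma P_rais : ∀ t : ℕ, Rais (Pw (t+1)) := by
  intro t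
  induction t with
  | zero =>
      intro k f hf ν hν
      exact xcheck_rais q _ k f hf ν hν
  | succ t ih => exact ih.comp (xcheck_rais q _)

lemma comm_word (hq0 : q ≠ 0) (hN : 3 ≤ N) {k : ℕ} (hk : k + 1 ≤ N - 2) :
    ∀ t, t ≤ k → ∀ f : V,
      xcheck q ((k + 1 : ℕ) : ZMod N) ((Pw t) f) = (Pw t) (xcheck q ((k + 1 : ℕ) : ZMod N) f) := by
  intro t
  induction t with
  | zero => intro _ f; rfl
  | succ t ih =>
      intro ht f
      show xcheck q ((k + 1 : ℕ) : ZMod N) ((Pw t) (xcheck q ((t : ℕ) : ZMod N) f)) = _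
      rw [ih (by omega), comm_far q hq0 hN (a := k+1) (b := t) (by omega) (by omega)]
      rfl

lemma qcomm_word (hq0 : q ≠ 0) (hN : 3 ≤ N) {k : ℕ} (hk : k + 1 ≤ N - 2) (f : V) :
    xcheck q ((k + 1 : ℕ) : ZMod N) ((Pw (k+1)) f)
      = q • (Pw (k+1)) (xcheck q ((k + 1 : ℕ) : ZMod N) f) := by
  show xcheck q ((k + 1 : ℕ) : ZMod N) ((Pw k) (xcheck q ((k : ℕ) : ZMod N) f)) = _
  rw [comm_word q hq0 hN hk k le_rfl, comm_adj q hq0 hN (a := k) hk, (P_lin q k).2]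
  rfl

lemma main_claim (hq0 : q ≠ 0) (hq : ∀ n : ℕ, 0 < n → q ^ n ≠ 1) (hN : 3 ≤ N) :
    ∀ k, k ≤ N - 2 →
    (compDesc (fun j => eqExp q (xcheck (N := N) q (j + 1 : ℕ))) k)
      ∘ eqExp q (xcheck (N := N) q 0)
      ∘ (compAsc (fun j => EqExp q (xcheck (N := N) q (j + 1 : ℕ))) k)
    = compAsc (fun j =>
        eqExp q (compAsc (fun m => xcheck (N := N) q (m : ℕ)) (j + 1))) (k + 1) := by
  intro k
  induction k with
  | zero =>
      intro _
      funext f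
      show eqExp q (xcheck q 0) f
        = eqExp q (compAsc (fun m => xcheck (N := N) q (m : ℕ)) (0 + 1)) f
      have h0 : compAsc (fun m => xcheck (N := N) q (m : ℕ)) (0 + 1) = xcheck q 0 := by
        funext g
        show xcheck q (((0 : ℕ) : ZMod N)) g = xcheck q 0 g
        norm_num
      rw [h0]
  | succ k ih =>
      intro hk1
      have IH := ih (by omega)
      have hk1' : k + 1 ≤ N - 2 := hk1
      funext f
      set A := xcheck (N := N) q ((k + 1 : ℕ) : ZMod N) with hA
      set R := fun j : ℕ =>
        eqExp q (compAsc (fun m => xcheck (N := N) q (m : ℕ)) (j + 1)) with hR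
      show eqExp q A ((compDesc (fun j => eqExp q (xcheck (N := N) q (j + 1 : ℕ))) k
          ∘ eqExp q (xcheck (N := N) q 0)
          ∘ compAsc (fun j => EqExp q (xcheck (N := N) q (j + 1 : ℕ))) k)
          (EqExp q A f))
        = compAsc R (k + 2) f
      rw [IH]
      -- chain commutation
      have chain : ∀ t, t ≤ k → ∀ g : V,
          eqExp q A (compAsc R t g) = compAsc R t (eqExp q A g) := by
        intro t
        induction t with
        | zero => intro _ g; rfl
        | succ t iht =>
            intro ht g
            show eqExp q A (compAsc R t (R t g)) = compAsc R t (R t (eqExp q A g))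
            rw [iht (by omega)]
            congr 1
            funext ν
            exact comm_op q (xcheck_lin q _) (P_lin q (t+1)) (xcheck_sloc q _) (P_sloc q t)
              (xcheck_rais q _) (P_rais q t)
              (comm_word q hq0 hN hk1' (t+1) (by omega)) g ν
      have hmid : eqExp q A (R k (EqExp q A f)) = R k (R (k+1) f) := by
        funext ν
        have hkey := key_op q hq (xcheck_lin q _) (P_lin q (k+1)) (xcheck_sloc q _)
          (P_sloc q k) (xcheck_rais q _) (P_rais q k)
          (qcomm_word q hq0 hN hk1') (EqExp q A f) ν
        rw [show R k (EqExp q A f) = eqExp q (compAsc (fun m => xcheck (N := N) q (m : ℕ)) (k+1))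
          (EqExp q A f) from rfl]
        rw [hkey, euler_op q hq (xcheck_lin q _) (xcheck_sloc q _) (xcheck_rais q _) f]
        rfl
      show eqExp q A (compAsc R k (R k (EqExp q A f))) = compAsc R (k + 2) f
      rw [chain k le_rfl, hmid]
      rfl

end Ops

end AdjRed

/-- **Lemma 2.2**: for `N ≥ 3`,
`e_q(−x̌_{N−2}) ∘ ⋯ ∘ e_q(−x̌_1) ∘ e_q(−x̌_0) ∘ e_q(−x̌_1)⁻¹ ∘ ⋯ ∘ e_q(−x̌_{N−2})⁻¹
 = e_q(−x̌_0) ∘ e_q(−x̌_0∘x̌_1) ∘ ⋯ ∘ e_q(−x̌_0∘x̌_1∘⋯∘x̌_{N−2})`,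
where `e_q(−x̌_j)⁻¹ = E_q(x̌_j)`. -/
theorem adjoint_reduction (q : ℂ) (hq0 : q ≠ 0) (hq : ∀ n : ℕ, 0 < n → q ^ n ≠ 1)
    (N : ℕ) [NeZero N] (hN : 3 ≤ N) :
    (compDesc (fun j => eqExp q (xcheck (N := N) q (j + 1 : ℕ))) (N - 2))
      ∘ eqExp q (xcheck (N := N) q 0)
      ∘ (compAsc (fun j => EqExp q (xcheck (N := N) q (j + 1 : ℕ))) (N - 2))
    = compAsc (fun j =>
        eqExp q (compAsc (fun m => xcheck (N := N) q (m : ℕ)) (j + 1))) (N - 1) := by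
  have h := AdjRed.main_claim q hq0 hq hN (N - 2) le_rfl
  rw [show N - 1 = N - 2 + 1 from by omega]
  exact h
end
end

section
/- (Proposition 2.3: equivalence of the simple-root and higher-root factorized forms.) Let N ≥ 3. Define G_L := E_q(x̌_1) ∘ E_q(x̌_2) ∘ ⋯ ∘ E_q(x̌_{N−2}), A_L^{(s)} := G_L^{−1} ∘ e_q(−x̌_0) ∘ G_L ∘ e_q(−x̌_{N−1}) ∘ ⋯ ∘ e_q(−x̌_2) ∘ e_q(−x̌_1) ∘ M_{φ(Λ)}, and A_L^{(h)} := e_q(−x̌_0) ∘ e_q(−x̌_0∘x̌_1) ∘ ⋯ ∘ e_q(−x̌_0∘x̌_1∘⋯∘x̌_{N−2}) ∘ e_q(−x̌_{N−1}) ∘ ⋯ ∘ e_q(−x̌_1) ∘ M_{φ(Λ)}. Further, with D := ∏_{i∈ℤ/Nℤ} α_i, define G_R := E_q(x̂_{N−2}) ∘ ⋯ ∘ E_q(x̂_1), A_R^{(s)} := M_{φ(q^{1−N}DΛ)} ∘ e_q(−x̂_1) ∘ ⋯ ∘ e_q(−x̂_{N−1}) ∘ G_R ∘ e_q(−x̂_0)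 ∘ G_R^{−1}, and A_R^{(h)} := M_{φ(q^{1−N}DΛ)} ∘ e_q(−x̂_1) ∘ ⋯ ∘ e_q(−x̂_{N−1}) ∘ e_q(−x̂_{N−2}∘⋯∘x̂_1∘x̂_0) ∘ ⋯ ∘ e_q(−x̂_1∘x̂_0) ∘ e_q(−x̂_0). Then A_L^{(s)} = A_L^{(h)} and A_R^{(s)} = A_R^{(h)}. -/
/-!
Proposition 2.3: equivalence of the simple-root and higher-root factorized
forms of the blocks `A_L` and `A_R` of the non-stationary affine gl_N
Hamiltonian.  Setting as in the paper: `V = MvPowerSeries (ZMod N) ℂ`,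
`p i : x^ν ↦ q^{ν_i} x^ν`, `x̌_i = M_{x_i} ∘ p_i⁻¹ ∘ p_{i−1}`,
`x̂_i = M_{α_i x_i} ∘ p_i ∘ p_{i−1}⁻¹`, and for degree-raising `T`,
`e_q(−T) = ∑ (−1)ⁿTⁿ/(q;q)_n`, `E_q(T) = ∑ q^{n(n−1)/2}Tⁿ/(q;q)_n = e_q(−T)⁻¹`,
defined by their (finite) coefficientwise sums.  `φ(w) = (w;q)_∞` as a formal
power series, `Λ = ∏ x_i`, `D = ∏ α_i`.
-/

noncomputable section
open scoped Classical

variable {N : ℕ}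

/-- `x̂_i := M_{α_i x_i} ∘ p_i ∘ p_{i−1}⁻¹`. -/
def xhat (q : ℂ) (α : ZMod N → ℂ) (i : ZMod N) (f : MvPowerSeries (ZMod N) ℂ) :
    MvPowerSeries (ZMod N) ℂ :=
  α i • (MvPowerSeries.X i * pmap q i (pinv q (i - 1) f))

/-- the power series `φ(c·Λ) = ∑_n (−1)ⁿ q^{n(n−1)/2} cⁿ Λⁿ/(q;q)_n`, where
`Λ = ∏_{i∈ℤ/N} x_i`: its coefficient at `ν` is nonzero only for constant `ν`. -/
def phiLam (q c : ℂ) : MvPowerSeries (ZMod N) ℂ :=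
  fun ν => if ∀ i : ZMod N, ν i = ν 0 then
    ((-1 : ℂ) ^ (ν 0) * q ^ (ν 0 * (ν 0 - 1) / 2) * c ^ (ν 0) / qPoch q (ν 0)) else 0


-- ===== auxiliary development =====

def eCo (q : ℂ) (n : ℕ) : ℂ := (-1:ℂ)^n / qPoch q n
def ECo (q : ℂ) (n : ℕ) : ℂ := q ^ (n * (n-1) / 2) / qPoch q n

-- ============ operator framework ============
abbrev Ser (N : ℕ) := MvPowerSeries (ZMod N) ℂ

def LinOp (T : Ser N → Ser N) : Prop :=
  ∀ (M : ℕ) (c : ℕ → ℂ) (g : ℕ → Ser N),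
    T (fun ν => ∑ m ∈ Finset.range M, c m * g m ν)
      = fun ν => ∑ m ∈ Finset.range M, c m * T (g m) ν

def LocOp (T : Ser N → Ser N) : Prop :=
  ∀ (D : ℕ) (f g : Ser N), (∀ ν, degOf ν < D → f ν = g ν) →
    ∀ ν, degOf ν ≤ D → T f ν = T g ν

def WLoc (T : Ser N → Ser N) : Prop :=
  ∀ (D : ℕ) (f g : Ser N), (∀ ν, degOf ν < D → f ν = g ν) →
    ∀ ν, degOf ν < D → T f ν = T g ν

theorem LinOp.id : LinOp (N := N) _root_.id := fun M c g => rfl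

theorem LinOp.comp {T S : Ser N → Ser N} (hT : LinOp T) (hS : LinOp S) :
    LinOp (T ∘ S) := by
  intro M c g
  show T (S _) = _
  rw [hS M c g, hT M c fun m => S (g m)]
  rfl

theorem LinOp.iter {T : Ser N → Ser N} (hT : LinOp T) (n : ℕ) : LinOp (T^[n]) := by
  induction n with
  | zero => exact LinOp.id
  | succ n ih => rw [Function.iterate_succ']; exact hT.comp ih

theorem LinOp.smul {T : Ser N → Ser N} (hT : LinOp T) (c : ℂ) (f : Ser N) :
    T (fun ν => c * f ν) = fun ν => c * T f ν := by
  have h := hT 1 (fun _ => c) (fun _ => f)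
  simpa using h

theorem LinOp.smul_apply {T : Ser N → Ser N} (hT : LinOp T) (c : ℂ) (f : Ser N) (ν) :
    T (fun ν => c * f ν) ν = c * T f ν := congrFun (hT.smul c f) ν

theorem LinOp.zero {T : Ser N → Ser N} (hT : LinOp T) :
    T (fun _ => (0:ℂ)) = fun _ => (0:ℂ) := by
  have h := hT 0 (fun _ => 0) (fun _ _ => 0)
  simpa using h

theorem LocOp.wloc {T : Ser N → Ser N} (h : LocOp T) : WLoc T :=
  fun D f g hfg ν hν => h D f g hfg ν (le_of_lt hν)

theorem WLoc.id : WLoc (N := N) _root_.id := fun _ f g hfg ν hν => hfg ν hν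

theorem WLoc.comp {T S : Ser N → Ser N} (hT : WLoc T) (hS : WLoc S) : WLoc (T ∘ S) :=
  fun D f g hfg ν hν => hT D _ _ (fun ν' h' => hS D f g hfg ν' h') ν hν

theorem LocOp.comp {T S : Ser N → Ser N} (hT : LocOp T) (hS : LocOp S) : LocOp (T ∘ S) :=
  fun D f g hfg ν hν => hT D _ _ (fun ν' h' => hS D f g hfg ν' (le_of_lt h')) ν hν

theorem LocOp.wloc_iter {T : Ser N → Ser N} (hT : LocOp T) (n : ℕ) : WLoc (T^[n]) := by
  induction n with
  | zero => exact WLoc.id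
  | succ n ih =>
      rw [Function.iterate_succ']
      exact fun D f g hfg ν hν =>
        hT D _ _ (fun ν' h' => ih D f g hfg ν' h') ν (le_of_lt hν)

theorem iter_zero {T : Ser N → Ser N} (hT : LinOp T) (n : ℕ) :
    T^[n] (fun _ => (0:ℂ)) = fun _ => (0:ℂ) := by
  induction n with
  | zero => rfl
  | succ n ih => exact (Function.iterate_succ_apply' T n (fun _ => (0:ℂ))).trans ((congrArg T ih).trans hT.zero)

theorem ord_vanish {T : Ser N → Ser N} (hTl : LinOp T) (hTo : LocOp T) (n : ℕ)
    (f : Ser N) (k : ℕ) (hf : ∀ ν, degOf ν < k → f ν = 0) :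
    ∀ ν, degOf ν < k + n → T^[n] f ν = 0 := by
  induction n with
  | zero => intro ν hν; exact hf ν (by omega)
  | succ n ih =>
      intro ν hν
      rw [Function.iterate_succ_apply']
      have h2 := hTo (k+n) (T^[n] f) (fun _ => 0) (fun ν' h' => ih ν' h') ν (by omega)
      rw [h2, hTl.zero]

def genE (c : ℕ → ℂ) (T : Ser N → Ser N) (f : Ser N) : Ser N :=
  fun ν => ∑ n ∈ Finset.range (degOf ν + 1), c n * (T^[n] f) ν

theorem eqExp_genE (q : ℂ) (T : Ser N → Ser N) : eqExp q T = genE (eCo q) T := rfl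
theorem EqExp_genE (q : ℂ) (T : Ser N → Ser N) : EqExp q T = genE (ECo q) T := rfl

theorem genE_trunc {T : Ser N → Ser N} (hTl : LinOp T) (hTo : LocOp T)
    (c : ℕ → ℂ) (f : Ser N) {ν} {M : ℕ} (hν : degOf ν < M) :
    genE c T f ν = ∑ n ∈ Finset.range M, c n * (T^[n] f) ν := by
  refine Finset.sum_subset ?_ ?_
  · intro x hx; simp only [Finset.mem_range] at *; omega
  · intro x _ hx'
    simp only [Finset.mem_range] at hx'
    have h0 : T^[x] f ν = 0 :=
      ord_vanish hTl hTo x f 0 (fun ν h => absurd h (by omega)) ν (by omega)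
    rw [h0, mul_zero]

theorem genE_expand {U S : Ser N → Ser N} (hU : LinOp U) (hUw : WLoc U)
    (hSl : LinOp S) (hSo : LocOp S) (c : ℕ → ℂ) (f : Ser N) {ν} {M : ℕ}
    (hν : degOf ν < M) :
    U (genE c S f) ν = ∑ m ∈ Finset.range M, c m * U (S^[m] f) ν := by
  have hagree : ∀ ν', degOf ν' < M →
      genE c S f ν' = (fun ν' => ∑ m ∈ Finset.range M, c m * (S^[m] f) ν') ν' :=
    fun ν' h => genE_trunc hSl hSo c f h
  rw [hUw M _ _ hagree ν hν, hU M c fun m => S^[m] f]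

theorem qswap_one {A B : Ser N → Ser N} (hAl : LinOp A) (c : ℂ)
    (h : ∀ f ν, B (A f) ν = c * A (B f) ν) :
    ∀ (b : ℕ) (f : Ser N) ν, B (A^[b] f) ν = c^b * A^[b] (B f) ν := by
  intro b
  induction b with
  | zero => intro f ν; simp
  | succ b ih =>
      intro f ν
      have e1 : B (A^[b+1] f) ν = c^b * A^[b] (B (A f)) ν := by
        rw [Function.iterate_succ_apply]; exact ih (A f) ν
      have e2 : A^[b] (B (A f)) = fun ν => c * A^[b+1] (B f) ν := by
        have hh : B (A f) = fun ν => c * A (B f) ν := funext (h f)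
        rw [hh, (hAl.iter b).smul c (A (B f))]
        funext ν'
        rw [← Function.iterate_succ_apply]
      rw [e1, e2]
      show c^b * (c * A^[b+1] (B f) ν) = c^(b+1) * A^[b+1] (B f) ν
      ring

theorem qswap {A B : Ser N → Ser N} (hAl : LinOp A) (hBl : LinOp B) (c : ℂ)
    (h : ∀ f ν, B (A f) ν = c * A (B f) ν) :
    ∀ (a b : ℕ) (f : Ser N) ν, B^[a] (A^[b] f) ν = c^(a*b) * A^[b] (B^[a] f) ν := by
  intro a
  induction a with
  | zero => intro b f ν; simp
  | succ a ih =>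
      intro b f ν
      have hone : B (A^[b] f) = fun ν => c^b * A^[b] (B f) ν :=
        funext (fun ν => qswap_one hAl c h b f ν)
      calc B^[a+1] (A^[b] f) ν = B^[a] (B (A^[b] f)) ν := by
            rw [Function.iterate_succ_apply]
        _ = c^b * B^[a] (A^[b] (B f)) ν := by rw [hone, (hBl.iter a).smul]
        _ = c^b * (c^(a*b) * A^[b] (B^[a] (B f)) ν) := by rw [ih b (B f) ν]
        _ = c^((a+1)*b) * A^[b] (B^[a+1] f) ν := by
            rw [← Function.iterate_succ_apply B a f]
            have e : (a+1)*b = b + a*b := by ring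
            rw [e, pow_add]; ring

theorem qswap_one' {A B : Ser N → Ser N} (hAl : LinOp A) (hBl : LinOp B) (c : ℂ)
    (h : ∀ f ν, B (A f) ν = c * A (B f) ν) :
    ∀ (m : ℕ) (g : Ser N) ν, B^[m] (A g) ν = c^m * A (B^[m] g) ν := by
  intro m g ν
  have hx := qswap hAl hBl c h m 1 g ν
  simpa using hx

theorem prodpow {A B : Ser N → Ser N} (hAl : LinOp A) (hBl : LinOp B) (c : ℂ)
    (h : ∀ f ν, B (A f) ν = c * A (B f) ν) :
    ∀ (m : ℕ) (f : Ser N) ν, (A ∘ B)^[m] f ν = c^(m*(m-1)/2) * A^[m] (B^[m] f) ν := by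
  intro m
  induction m with
  | zero => intro f ν; simp
  | succ m ih =>
      intro f ν
      have hone : B^[m] (A (B f)) = fun ν => c^m * A (B^[m] (B f)) ν :=
        funext (fun ν => qswap_one' hAl hBl c h m (B f) ν)
      calc (A ∘ B)^[m+1] f ν = (A ∘ B)^[m] ((A ∘ B) f) ν := by
            rw [Function.iterate_succ_apply]
        _ = c^(m*(m-1)/2) * A^[m] (B^[m] (A (B f))) ν := ih ((A ∘ B) f) ν
        _ = c^(m*(m-1)/2) * (c^m * A^[m] (A (B^[m] (B f))) ν) := by
            rw [hone, (hAl.iter m).smul]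
        _ = c^((m+1)*((m+1)-1)/2) * A^[m+1] (B^[m+1] f) ν := by
            rw [← Function.iterate_succ_apply A m, ← Function.iterate_succ_apply B m]
            have e : (m+1)*((m+1)-1)/2 = m*(m-1)/2 + m := by
              have h : (m+1)*m/2 = m*(m-1)/2 + m := by
                have h2 : (m+1)*m/2 = (m+1)*((m+1)-1)/2 := by simp
                rw [h2, ← Nat.choose_two_right, ← Nat.choose_two_right,
                  Nat.choose_succ_succ, Nat.choose_one_right, Nat.add_comm]
              simpa using h
            rw [e, pow_add]; ring

theorem comm_iter {A B : Ser N → Ser N} (h : ∀ f, A (B f) = B (A f)) (a b : ℕ)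
    (f : Ser N) : A^[a] (B^[b] f) = B^[b] (A^[a] f) := by
  have hc : Function.Commute A B := h
  exact ((hc.iterate_left a).iterate_right b) f

theorem exp_comm {A B : Ser N → Ser N} (hAl : LinOp A) (hAo : LocOp A)
    (hBl : LinOp B) (hBo : LocOp B) (h : ∀ f, A (B f) = B (A f)) (c d : ℕ → ℂ)
    (f : Ser N) : genE c A (genE d B f) = genE d B (genE c A f) := by
  funext ν
  have hν : degOf ν < degOf ν + 1 := by omega
  set M := degOf ν + 1 with hM
  trans ∑ n ∈ Finset.range M, ∑ m ∈ Finset.range M, c n * (d m * (A^[n] (B^[m] f)) ν)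
  · rw [genE_trunc hAl hAo c _ hν]
    refine Finset.sum_congr rfl fun n _ => ?_
    rw [genE_expand (hAl.iter n) (hAo.wloc_iter n) hBl hBo d f hν, Finset.mul_sum]
  trans ∑ m ∈ Finset.range M, ∑ n ∈ Finset.range M, d m * (c n * (B^[m] (A^[n] f)) ν)
  · rw [Finset.sum_comm]
    refine Finset.sum_congr rfl fun m _ => Finset.sum_congr rfl fun n _ => ?_
    rw [comm_iter h n m f]; ring
  · rw [genE_trunc hBl hBo d _ hν]
    refine (Finset.sum_congr rfl fun m _ => ?_)
    rw [genE_expand (hBl.iter m) (hBo.wloc_iter m) hAl hAo c f hν, Finset.mul_sum]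

theorem triSum (M : ℕ) (F : ℕ → ℕ → ℂ) (hF : ∀ a c, M ≤ a + c → F a c = 0) :
    ∑ a ∈ Finset.range M, ∑ c ∈ Finset.range M, F a c
      = ∑ j ∈ Finset.range M, ∑ a ∈ Finset.range (j+1), F a (j-a) := by
  rw [← Finset.sum_product']
  rw [← Finset.sum_sigma (Finset.range M) (fun j => Finset.range (j+1))
    (fun x => F x.2 (x.1 - x.2))]
  rw [← Finset.sum_filter_of_ne (p := fun p => p.1 + p.2 < M)
    (by intro p _ hp; by_contra hc; exact hp (hF p.1 p.2 (by omega)))]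
  refine Finset.sum_nbij' (fun p => (⟨p.1 + p.2, p.1⟩ : Σ _ : ℕ, ℕ))
    (fun x => (x.2, x.1 - x.2)) ?_ ?_ ?_ ?_ ?_
  · intro p hp
    simp only [Finset.mem_filter, Finset.mem_product, Finset.mem_range] at hp
    simp only [Finset.mem_sigma, Finset.mem_range]
    omega
  · intro x hx
    simp only [Finset.mem_sigma, Finset.mem_range] at hx
    simp only [Finset.mem_filter, Finset.mem_product, Finset.mem_range]
    omega
  · intro p hp
    simp only [Finset.mem_filter, Finset.mem_product, Finset.mem_range] at hp
    dsimp only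
    exact Prod.ext_iff.mpr ⟨rfl, by omega⟩
  · intro x hx
    simp only [Finset.mem_sigma, Finset.mem_range] at hx
    dsimp only
    exact Sigma.ext_iff.mpr ⟨by show x.snd + (x.fst - x.snd) = x.fst; omega, HEq.rfl⟩
  · intro p _
    simp only []
    congr 1
    omega

theorem shiftSum (M m : ℕ) (G : ℕ → ℂ) (h1 : ∀ b, M ≤ b → G b = 0) :
    ∑ n ∈ Finset.range M, G (n + m) = ∑ b ∈ Finset.range M, (if m ≤ b then G b else 0) := by
  have e1 : ∑ n ∈ Finset.range M, G (n + m) = ∑ b ∈ Finset.Ico m (m + M), G b := by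
    rw [Finset.sum_Ico_eq_sum_range]
    simp only [Nat.add_sub_cancel_left]
    exact Finset.sum_congr rfl fun n _ => by rw [Nat.add_comm]
  rw [e1]
  have e2 : ∑ b ∈ Finset.Ico m (m + M), G b
      = ∑ b ∈ Finset.Ico m (m + M), (if m ≤ b then G b else 0) := by
    refine Finset.sum_congr rfl fun b hb => ?_
    rw [if_pos (Finset.mem_Ico.mp hb).1]
  rw [e2]
  have e3 : ∑ b ∈ Finset.range (m + M), (if m ≤ b then G b else 0)
      = ∑ b ∈ Finset.Ico 0 m, (if m ≤ b then G b else 0)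
        + ∑ b ∈ Finset.Ico m (m + M), (if m ≤ b then G b else 0) := by
    rw [Finset.sum_Ico_consecutive _ (Nat.zero_le m) (Nat.le_add_right m M),
      Finset.range_eq_Ico]
  have e4 : ∑ b ∈ Finset.Ico 0 m, (if m ≤ b then G b else 0) = 0 := by
    refine Finset.sum_eq_zero fun b hb => ?_
    rw [if_neg (by simp only [Finset.mem_Ico] at hb; omega)]
  have e5 : ∑ b ∈ Finset.range (m + M), (if m ≤ b then G b else 0)
      = ∑ b ∈ Finset.range M, (if m ≤ b then G b else 0) := by
    refine (Finset.sum_subset (Finset.range_subset_range.mpr (by omega)) ?_).symm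
    intro b _ hb
    simp only [Finset.mem_range, not_lt] at hb
    split
    · exact h1 b (by omega)
    · rfl
  rw [← e5, e3, e4, zero_add]

-- ===== scalar identities =====
lemma qPoch_zero (q : ℂ) : qPoch q 0 = 1 := by simp [qPoch]

lemma qPoch_succ (q : ℂ) (n : ℕ) : qPoch q (n+1) = qPoch q n * (1 - q^(n+1)) :=
  Finset.prod_range_succ _ _

section scalar
variable {q : ℂ} (hq : ∀ n : ℕ, 0 < n → q ^ n ≠ 1)
include hq

lemma one_sub_pow_ne (n : ℕ) (hn : 0 < n) : (1:ℂ) - q^n ≠ 0 := by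
  intro h
  exact hq n hn (sub_eq_zero.mp h).symm

lemma qPoch_ne_zero (n : ℕ) : qPoch q n ≠ 0 := by
  induction n with
  | zero => simp [qPoch]
  | succ n ih =>
      rw [qPoch_succ]
      exact mul_ne_zero ih (one_sub_pow_ne hq (n+1) (Nat.succ_pos n))
end scalar

lemma tri_succ (m : ℕ) : (m+1)*m/2 = m*(m-1)/2 + m := by
  have h : (m+1)*m/2 = (m+1)*((m+1)-1)/2 := by simp
  rw [h, ← Nat.choose_two_right, ← Nat.choose_two_right, Nat.choose_succ_succ,
    Nat.choose_one_right, Nat.add_comm]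

noncomputable def keyS (q : ℂ) (j b : ℕ) : ℂ :=
  ∑ a ∈ Finset.range (j+1), eCo q a * ECo q (j-a) * q ^ (a*b)
noncomputable def Pval (q : ℂ) (j b : ℕ) : ℂ :=
  if j ≤ b then q ^ (j*(j-1)/2) * qPoch q b / (qPoch q (b-j) * qPoch q j) else 0

section key
variable {q : ℂ} (hq : ∀ n : ℕ, 0 < n → q ^ n ≠ 1)
include hq

lemma keyS_rec (j b : ℕ) :
    (1 - q^(j+1)) * keyS q (j+1) b = (q^j - q^b) * keyS q j b := by
  have h1 : ∀ a ∈ Finset.range (j+2),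
      (1 - q^(j+1)) * (eCo q a * ECo q (j+1-a) * q ^ (a*b))
      = q^a*(1-q^(j+1-a)) * (eCo q a * ECo q (j+1-a) * q ^ (a*b))
        + (1-q^a) * (eCo q a * ECo q (j+1-a) * q ^ (a*b)) := by
    intro a ha
    rw [← add_mul]
    congr 1
    have hqa : q^a * q^(j+1-a) = q^(j+1) := by
      rw [← pow_add]; congr 1
      have := Finset.mem_range.mp ha; omega
    rw [mul_sub, mul_one, hqa]; ring
  rw [keyS, Finset.mul_sum, Finset.sum_congr rfl h1, Finset.sum_add_distrib]
  have hS1 : ∑ a ∈ Finset.range (j+2),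
      q^a*(1-q^(j+1-a)) * (eCo q a * ECo q (j+1-a) * q ^ (a*b))
      = q^j * keyS q j b := by
    rw [Finset.sum_range_succ]
    simp only [Nat.sub_self, pow_zero, sub_self, mul_zero, zero_mul, add_zero]
    rw [keyS, Finset.mul_sum]
    refine Finset.sum_congr rfl fun a ha => ?_
    have haj : a ≤ j := by have := Finset.mem_range.mp ha; omega
    have e1 : j+1-a = (j-a)+1 := by omega
    have e2 : ((j-a)+1) * (((j-a)+1)-1) / 2 = (j-a)*((j-a)-1)/2 + (j-a) := by
      simpa using tri_succ (j-a)
    have h3 : (1:ℂ) - q^((j-a)+1) ≠ 0 := one_sub_pow_ne hq _ (Nat.succ_pos _)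
    have h4 : qPoch q (j-a) ≠ 0 := qPoch_ne_zero hq _
    have h5 : qPoch q a ≠ 0 := qPoch_ne_zero hq _
    have hqa : q^a * q^(j-a) = q^j := by rw [← pow_add]; congr 1; omega
    rw [e1]
    simp only [eCo, ECo]
    rw [qPoch_succ, e2, pow_add q ((j-a)*((j-a)-1)/2) (j-a), ← hqa]
    field_simp
  have hS2 : ∑ a ∈ Finset.range (j+2),
      (1-q^a) * (eCo q a * ECo q (j+1-a) * q ^ (a*b))
      = -(q^b) * keyS q j b := by
    rw [Finset.sum_range_succ']
    simp only [pow_zero, sub_self, zero_mul, add_zero]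
    rw [keyS, Finset.mul_sum]
    refine Finset.sum_congr rfl fun a ha => ?_
    have e1 : j+1-(a+1) = j-a := by omega
    have h3 : (1:ℂ) - q^(a+1) ≠ 0 := one_sub_pow_ne hq _ (Nat.succ_pos _)
    have h5 : qPoch q a ≠ 0 := qPoch_ne_zero hq _
    have h4 : qPoch q (j-a) ≠ 0 := qPoch_ne_zero hq _
    have hqa : q^((a+1)*b) = q^(a*b) * q^b := by rw [← pow_add]; congr 1; ring
    rw [e1]
    simp only [eCo]
    rw [qPoch_succ, pow_succ (-1:ℂ) a, hqa]
    field_simp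
  rw [hS1, hS2]
  ring

lemma keyId (j b : ℕ) : keyS q j b = Pval q j b := by
  induction j generalizing b with
  | zero =>
      have hb : qPoch q b ≠ 0 := qPoch_ne_zero hq b
      rw [keyS, Pval]
      rw [if_pos (Nat.zero_le b)]
      simp [eCo, ECo, qPoch_zero]
      field_simp
  | succ j ih =>
      have hj1 : (1:ℂ) - q^(j+1) ≠ 0 := one_sub_pow_ne hq _ (Nat.succ_pos _)
      have hrec := keyS_rec hq j b
      rw [ih b] at hrec
      have target : (q^j - q^b) * Pval q j b = (1 - q^(j+1)) * Pval q (j+1) b := by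
        by_cases hb1 : j + 1 ≤ b
        · have hb0 : j ≤ b := by omega
          rw [Pval, Pval, if_pos hb0, if_pos hb1]
          have e1 : b - j = (b-(j+1))+1 := by omega
          have e2 : (j+1)*((j+1)-1)/2 = j*(j-1)/2 + j := by simpa using tri_succ j
          have e3 : q^b = q^j * q^(b-j) := by rw [← pow_add]; congr 1; omega
          have e4 : ((b-(j+1))+1) = b - j := by omega
          rw [e1, qPoch_succ, qPoch_succ, e2, pow_add q (j*(j-1)/2) j, e4, e3]
          have n1 : qPoch q j ≠ 0 := qPoch_ne_zero hq _
          have n2 : qPoch q (b-(j+1)) ≠ 0 := qPoch_ne_zero hq _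
          have n3 : (1:ℂ) - q^(b-j) ≠ 0 := one_sub_pow_ne hq _ (by omega)
          field_simp
        · by_cases hb0 : j ≤ b
          · have : b = j := by omega
            subst this
            rw [Pval, Pval, if_neg hb1]
            simp
          · rw [Pval, Pval, if_neg hb0, if_neg (by omega)]
            simp
      rw [target] at hrec
      exact mul_left_cancel₀ hj1 hrec
end key

-- ===== pentagon identities =====
section pent
variable {q : ℂ} (hq : ∀ n : ℕ, 0 < n → q ^ n ≠ 1)
include hq

theorem eCo_split {m b : ℕ} (hmb : m ≤ b) :
    eCo q (b-m) * eCo q m * q^(m*(m-1)/2) = Pval q m b * eCo q b := by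
  have n1 : qPoch q (b-m) ≠ 0 := qPoch_ne_zero hq _
  have n2 : qPoch q m ≠ 0 := qPoch_ne_zero hq _
  have n3 : qPoch q b ≠ 0 := qPoch_ne_zero hq _
  have e1 : (-1:ℂ)^(b-m) * (-1)^m = (-1)^b := by rw [← pow_add]; congr 1; omega
  rw [Pval, if_pos hmb, eCo, eCo, eCo]
  field_simp
  linear_combination (q^(m*(m-1)/2)) * e1

omit hq in
theorem keyS_rev (q : ℂ) (j b : ℕ) :
    ∑ a ∈ Finset.range (j+1), ECo q a * eCo q (j-a) * q^((j-a)*b) = keyS q j b := by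
  rw [keyS, ← Finset.sum_range_reflect (fun a => eCo q a * ECo q (j-a) * q ^ (a*b)) (j+1)]
  refine Finset.sum_congr rfl fun a ha => ?_
  have haj : a ≤ j := by simp only [Finset.mem_range] at ha; omega
  have e1 : j + 1 - 1 - a = j - a := by omega
  have e2 : j - (j - a) = a := by omega
  rw [e1, e2]
  ring

variable {A B : Ser N → Ser N} (hAl : LinOp A) (hAo : LocOp A)
  (hBl : LinOp B) (hBo : LocOp B)
include hAl hAo hBl hBo

theorem pentL (h : ∀ f ν, B (A f) ν = q * A (B f) ν) (g : Ser N) :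
    eqExp q B (eqExp q A (EqExp q B g)) = eqExp q A (eqExp q (A ∘ B) g) := by
  funext ν
  have hν : degOf ν < degOf ν + 1 := lt_add_one _
  set M := degOf ν + 1 with hM
  have hXv : ∀ i j : ℕ, M ≤ i + j → A^[i] (B^[j] g) ν = 0 := by
    intro i j hij
    have h1 : ∀ ν', degOf ν' < j → B^[j] g ν' = 0 := fun ν' h' =>
      ord_vanish hBl hBo j g 0 (fun _ hh => absurd hh (by omega)) ν' (by omega)
    exact ord_vanish hAl hAo i (B^[j] g) j h1 ν (by omega)
  show genE (eCo q) B (genE (eCo q) A (genE (ECo q) B g)) ν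
      = genE (eCo q) A (genE (eCo q) (A ∘ B) g) ν
  have L1 : genE (eCo q) B (genE (eCo q) A (genE (ECo q) B g)) ν
      = ∑ a ∈ Finset.range M, ∑ b ∈ Finset.range M, ∑ c ∈ Finset.range M,
          eCo q a * (eCo q b * (ECo q c * (B^[a] (A^[b] (B^[c] g)) ν))) := by
    rw [genE_trunc hBl hBo _ _ hν]
    refine Finset.sum_congr rfl fun a _ => ?_
    rw [genE_expand (hBl.iter a) (hBo.wloc_iter a) hAl hAo _ _ hν, Finset.mul_sum]
    refine Finset.sum_congr rfl fun b _ => ?_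
    have e := genE_expand (U := fun f => B^[a] (A^[b] f)) (S := B)
      ((hBl.iter a).comp (hAl.iter b)) ((hBo.wloc_iter a).comp (hAo.wloc_iter b))
      hBl hBo (ECo q) g hν
    rw [show B^[a] (A^[b] (genE (ECo q) B g)) ν
        = ∑ m ∈ Finset.range M, ECo q m * B^[a] (A^[b] (B^[m] g)) ν from e,
      Finset.mul_sum, Finset.mul_sum]
  have L2 : ∀ a b c : ℕ, B^[a] (A^[b] (B^[c] g)) ν
      = q^(a*b) * A^[b] (B^[a+c] g) ν := by
    intro a b c
    rw [Function.iterate_add_apply B a c g]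
    exact qswap hAl hBl q h a b (B^[c] g) ν
  have L3 : genE (eCo q) B (genE (eCo q) A (genE (ECo q) B g)) ν
      = ∑ b ∈ Finset.range M, ∑ j ∈ Finset.range M,
          Pval q j b * (eCo q b * (A^[b] (B^[j] g) ν)) := by
    rw [L1, Finset.sum_comm]
    refine Finset.sum_congr rfl fun b _ => ?_
    have step1 : ∑ a ∈ Finset.range M, ∑ c ∈ Finset.range M,
        eCo q a * (eCo q b * (ECo q c * (B^[a] (A^[b] (B^[c] g)) ν)))
        = ∑ a ∈ Finset.range M, ∑ c ∈ Finset.range M,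
          (fun a c => (eCo q a * ECo q c * q^(a*b)) * (eCo q b * (A^[b] (B^[a+c] g) ν))) a c := by
      refine Finset.sum_congr rfl fun a _ => Finset.sum_congr rfl fun c _ => ?_
      rw [L2 a b c]; ring
    rw [step1]
    rw [triSum M (fun a c => (eCo q a * ECo q c * q^(a*b)) * (eCo q b * (A^[b] (B^[a+c] g) ν)))
      (by
        intro a c hac
        have hz : A^[b] (B^[a+c] g) ν = 0 := hXv b (a+c) (by omega)
        rw [hz]
        ring)]
    refine Finset.sum_congr rfl fun j _ => ?_
    have step2 : ∀ a ∈ Finset.range (j+1),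
        (eCo q a * ECo q (j-a) * q^(a*b)) * (eCo q b * (A^[b] (B^[a+(j-a)] g) ν))
        = eCo q a * ECo q (j-a) * q^(a*b) * (eCo q b * (A^[b] (B^[j] g) ν)) := by
      intro a ha
      have e : a + (j - a) = j := by simp only [Finset.mem_range] at ha; omega
      rw [e]
    rw [Finset.sum_congr rfl step2, ← Finset.sum_mul]
    rw [show (∑ a ∈ Finset.range (j+1), eCo q a * ECo q (j-a) * q^(a*b)) = keyS q j b from rfl]
    rw [keyId hq j b]
  have R1 : genE (eCo q) A (genE (eCo q) (A ∘ B) g) ν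
      = ∑ n ∈ Finset.range M, ∑ m ∈ Finset.range M,
          eCo q n * (eCo q m * (A^[n] ((A ∘ B)^[m] g) ν)) := by
    rw [genE_trunc hAl hAo _ _ hν]
    refine Finset.sum_congr rfl fun n _ => ?_
    rw [genE_expand (hAl.iter n) (hAo.wloc_iter n) (hAl.comp hBl) (hAo.comp hBo) _ _ hν,
      Finset.mul_sum]
  have R2 : ∀ n m : ℕ, A^[n] ((A ∘ B)^[m] g) ν
      = q^(m*(m-1)/2) * A^[n+m] (B^[m] g) ν := by
    intro n m
    have hp : (A ∘ B)^[m] g = fun ν' => q^(m*(m-1)/2) * A^[m] (B^[m] g) ν' :=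
      funext (fun ν' => prodpow hAl hBl q h m g ν')
    rw [hp, (hAl.iter n).smul_apply, ← Function.iterate_add_apply A n m]
  have R3 : genE (eCo q) A (genE (eCo q) (A ∘ B) g) ν
      = ∑ m ∈ Finset.range M, ∑ b ∈ Finset.range M,
          Pval q m b * (eCo q b * (A^[b] (B^[m] g) ν)) := by
    rw [R1, Finset.sum_comm]
    refine Finset.sum_congr rfl fun m _ => ?_
    have step1 : ∑ n ∈ Finset.range M, eCo q n * (eCo q m * (A^[n] ((A ∘ B)^[m] g) ν))
        = ∑ n ∈ Finset.range M,
            (fun b => eCo q (b-m) * eCo q m * q^(m*(m-1)/2) * (A^[b] (B^[m] g) ν)) (n + m) := by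
      refine Finset.sum_congr rfl fun n _ => ?_
      rw [R2 n m]
      dsimp only
      have e : n + m - m = n := by omega
      rw [e]
      ring
    rw [step1]
    rw [shiftSum M m (fun b => eCo q (b-m) * eCo q m * q^(m*(m-1)/2) * (A^[b] (B^[m] g) ν))
      (fun b hb => by
        have hz : A^[b] (B^[m] g) ν = 0 := hXv b m (by omega)
        rw [hz, mul_zero])]
    refine Finset.sum_congr rfl fun b _ => ?_
    by_cases hmb : m ≤ b
    · rw [if_pos hmb]
      have hsp := eCo_split hq (m := m) (b := b) hmb
      linear_combination (A^[b] (B^[m] g) ν) * hsp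
    · rw [if_neg hmb, Pval, if_neg hmb]
      ring
  rw [L3, R3, Finset.sum_comm]

theorem pentR (h : ∀ f ν, A (B f) ν = q * B (A f) ν) (g : Ser N) :
    EqExp q B (eqExp q A (eqExp q B g)) = eqExp q (B ∘ A) (eqExp q A g) := by
  funext ν
  have hν : degOf ν < degOf ν + 1 := lt_add_one _
  set M := degOf ν + 1 with hM
  have hXv : ∀ j i : ℕ, M ≤ j + i → B^[j] (A^[i] g) ν = 0 := by
    intro j i hij
    have h1 : ∀ ν', degOf ν' < i → A^[i] g ν' = 0 := fun ν' h' =>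
      ord_vanish hAl hAo i g 0 (fun _ hh => absurd hh (by omega)) ν' (by omega)
    exact ord_vanish hBl hBo j (A^[i] g) i h1 ν (by omega)
  show genE (ECo q) B (genE (eCo q) A (genE (eCo q) B g)) ν
      = genE (eCo q) (B ∘ A) (genE (eCo q) A g) ν
  have L1 : genE (ECo q) B (genE (eCo q) A (genE (eCo q) B g)) ν
      = ∑ a ∈ Finset.range M, ∑ b ∈ Finset.range M, ∑ c ∈ Finset.range M,
          ECo q a * (eCo q b * (eCo q c * (B^[a] (A^[b] (B^[c] g)) ν))) := by
    rw [genE_trunc hBl hBo _ _ hν]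
    refine Finset.sum_congr rfl fun a _ => ?_
    rw [genE_expand (hBl.iter a) (hBo.wloc_iter a) hAl hAo _ _ hν, Finset.mul_sum]
    refine Finset.sum_congr rfl fun b _ => ?_
    have e := genE_expand (U := fun f => B^[a] (A^[b] f)) (S := B)
      ((hBl.iter a).comp (hAl.iter b)) ((hBo.wloc_iter a).comp (hAo.wloc_iter b))
      hBl hBo (eCo q) g hν
    rw [show B^[a] (A^[b] (genE (eCo q) B g)) ν
        = ∑ m ∈ Finset.range M, eCo q m * B^[a] (A^[b] (B^[m] g)) ν from e,
      Finset.mul_sum, Finset.mul_sum]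
  have L2 : ∀ a b c : ℕ, B^[a] (A^[b] (B^[c] g)) ν
      = q^(b*c) * B^[a+c] (A^[b] g) ν := by
    intro a b c
    have hin : A^[b] (B^[c] g) = fun ν' => q^(b*c) * B^[c] (A^[b] g) ν' :=
      funext (fun ν' => qswap hBl hAl q h b c g ν')
    rw [hin, (hBl.iter a).smul_apply, ← Function.iterate_add_apply B a c]
  have L3 : genE (ECo q) B (genE (eCo q) A (genE (eCo q) B g)) ν
      = ∑ b ∈ Finset.range M, ∑ j ∈ Finset.range M,
          Pval q j b * (eCo q b * (B^[j] (A^[b] g) ν)) := by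
    rw [L1, Finset.sum_comm]
    refine Finset.sum_congr rfl fun b _ => ?_
    have step1 : ∑ a ∈ Finset.range M, ∑ c ∈ Finset.range M,
        ECo q a * (eCo q b * (eCo q c * (B^[a] (A^[b] (B^[c] g)) ν)))
        = ∑ a ∈ Finset.range M, ∑ c ∈ Finset.range M,
          (fun a c => (ECo q a * eCo q c * q^(c*b)) * (eCo q b * (B^[a+c] (A^[b] g) ν))) a c := by
      refine Finset.sum_congr rfl fun a _ => Finset.sum_congr rfl fun c _ => ?_
      rw [L2 a b c]
      dsimp only
      have e : q^(b*c) = q^(c*b) := by rw [Nat.mul_comm]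
      rw [e]; ring
    rw [step1]
    rw [triSum M (fun a c => (ECo q a * eCo q c * q^(c*b)) * (eCo q b * (B^[a+c] (A^[b] g) ν)))
      (by
        intro a c hac
        have hz : B^[a+c] (A^[b] g) ν = 0 := hXv (a+c) b (by omega)
        rw [hz]
        ring)]
    refine Finset.sum_congr rfl fun j _ => ?_
    have step2 : ∀ a ∈ Finset.range (j+1),
        (ECo q a * eCo q (j-a) * q^((j-a)*b)) * (eCo q b * (B^[a+(j-a)] (A^[b] g) ν))
        = ECo q a * eCo q (j-a) * q^((j-a)*b) * (eCo q b * (B^[j] (A^[b] g) ν)) := by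
      intro a ha
      have e : a + (j - a) = j := by simp only [Finset.mem_range] at ha; omega
      rw [e]
    rw [Finset.sum_congr rfl step2, ← Finset.sum_mul]
    rw [show (∑ a ∈ Finset.range (j+1), ECo q a * eCo q (j-a) * q^((j-a)*b))
        = keyS q j b from keyS_rev q j b]
    rw [keyId hq j b]
  have R1 : genE (eCo q) (B ∘ A) (genE (eCo q) A g) ν
      = ∑ m ∈ Finset.range M, ∑ n ∈ Finset.range M,
          eCo q m * (eCo q n * ((B ∘ A)^[m] (A^[n] g) ν)) := by
    rw [genE_trunc (hBl.comp hAl) (hBo.comp hAo) _ _ hν]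
    refine Finset.sum_congr rfl fun m _ => ?_
    rw [genE_expand ((hBl.comp hAl).iter m) (((hBo.comp hAo)).wloc_iter m) hAl hAo _ _ hν,
      Finset.mul_sum]
  have R2 : ∀ m n : ℕ, (B ∘ A)^[m] (A^[n] g) ν
      = q^(m*(m-1)/2) * B^[m] (A^[n+m] g) ν := by
    intro m n
    rw [prodpow hBl hAl q h m (A^[n] g) ν]
    have e : B^[m] (A^[m] (A^[n] g)) = B^[m] (A^[n+m] g) := by
      congr 1
      rw [← Function.iterate_add_apply A m n g]
      congr 1
      omega
    rw [e]
  have R3 : genE (eCo q) (B ∘ A) (genE (eCo q) A g) ν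
      = ∑ m ∈ Finset.range M, ∑ b ∈ Finset.range M,
          Pval q m b * (eCo q b * (B^[m] (A^[b] g) ν)) := by
    rw [R1]
    refine Finset.sum_congr rfl fun m _ => ?_
    have step1 : ∑ n ∈ Finset.range M, eCo q m * (eCo q n * ((B ∘ A)^[m] (A^[n] g) ν))
        = ∑ n ∈ Finset.range M,
            (fun b => eCo q (b-m) * eCo q m * q^(m*(m-1)/2) * (B^[m] (A^[b] g) ν)) (n + m) := by
      refine Finset.sum_congr rfl fun n _ => ?_
      rw [R2 m n]
      dsimp only
      have e : n + m - m = n := by omega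
      rw [e]
      ring
    rw [step1]
    rw [shiftSum M m (fun b => eCo q (b-m) * eCo q m * q^(m*(m-1)/2) * (B^[m] (A^[b] g) ν))
      (fun b hb => by
        have hz : B^[m] (A^[b] g) ν = 0 := hXv m b (by omega)
        rw [hz, mul_zero])]
    refine Finset.sum_congr rfl fun b _ => ?_
    by_cases hmb : m ≤ b
    · rw [if_pos hmb]
      have hsp := eCo_split hq (m := m) (b := b) hmb
      linear_combination (B^[m] (A^[b] g) ν) * hsp
    · rw [if_neg hmb, Pval, if_neg hmb]
      ring
  rw [L3, R3, Finset.sum_comm]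

end pent


-- ===== concrete operators =====

theorem degOf_add (μ σ : ZMod N →₀ ℕ) : degOf (μ + σ) = degOf μ + degOf σ :=
  Finsupp.sum_add_index' (fun _ => rfl) (fun _ _ _ => rfl)

theorem degOf_single (i : ZMod N) : degOf (Finsupp.single i 1) = 1 :=
  Finsupp.sum_single_index rfl

theorem Xmul_coeff (i : ZMod N) (g : Ser N) (ν : ZMod N →₀ ℕ) :
    (MvPowerSeries.X i * g : Ser N) ν
      = if Finsupp.single i 1 ≤ ν then g (ν - Finsupp.single i 1) else 0 := by
  have h0 : (MvPowerSeries.X i * g : Ser N) ν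
      = MvPowerSeries.coeff ν (MvPowerSeries.X i * g) := rfl
  rw [h0, MvPowerSeries.X_def, MvPowerSeries.coeff_monomial_mul]
  split <;> simp [MvPowerSeries.coeff_apply]

theorem xcheck_apply (q : ℂ) (i : ZMod N) (f : Ser N) (ν : ZMod N →₀ ℕ) :
    xcheck q i f ν = if Finsupp.single i 1 ≤ ν then
      (fun μ : ZMod N →₀ ℕ => q ^ (-(μ i : ℤ)) * (q ^ (μ (i-1)) * f μ))
        (ν - Finsupp.single i 1)
    else 0 := by
  rw [xcheck, Xmul_coeff]
  split <;> rfl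

theorem xcheck_add (q : ℂ) (i : ZMod N) (f : Ser N) (μ : ZMod N →₀ ℕ) :
    xcheck q i f (μ + Finsupp.single i 1)
      = q ^ (-(μ i : ℤ)) * (q ^ (μ (i-1)) * f μ) := by
  rw [xcheck_apply, if_pos le_add_self, add_tsub_cancel_right]

theorem xcheck_zero' (q : ℂ) (i : ZMod N) (f : Ser N) (ν : ZMod N →₀ ℕ) (h : ν i = 0) :
    xcheck q i f ν = 0 := by
  rw [xcheck_apply, if_neg]
  intro hle
  have := Finsupp.single_le_iff.mp hle
  omega

theorem xhat_apply (q : ℂ) (α : ZMod N → ℂ) (i : ZMod N) (f : Ser N) (ν : ZMod N →₀ ℕ) :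
    xhat q α i f ν = if Finsupp.single i 1 ≤ ν then
      (fun μ : ZMod N →₀ ℕ => α i * (q ^ (μ i) * (q ^ (-(μ (i-1) : ℤ)) * f μ)))
        (ν - Finsupp.single i 1)
    else 0 := by
  show α i * ((MvPowerSeries.X i * pmap q i (pinv q (i - 1) f) : Ser N) ν) = _
  rw [Xmul_coeff]
  split
  · rfl
  · exact mul_zero _

theorem xhat_add (q : ℂ) (α : ZMod N → ℂ) (i : ZMod N) (f : Ser N) (μ : ZMod N →₀ ℕ) :
    xhat q α i f (μ + Finsupp.single i 1)
      = α i * (q ^ (μ i) * (q ^ (-(μ (i-1) : ℤ)) * f μ)) := by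
  rw [xhat_apply, if_pos le_add_self, add_tsub_cancel_right]

theorem xhat_zero' (q : ℂ) (α : ZMod N → ℂ) (i : ZMod N) (f : Ser N) (ν : ZMod N →₀ ℕ)
    (h : ν i = 0) : xhat q α i f ν = 0 := by
  rw [xhat_apply, if_neg]
  intro hle
  have := Finsupp.single_le_iff.mp hle
  omega

theorem single_decomp {i : ZMod N} {ν : ZMod N →₀ ℕ} (h : ν i ≠ 0) :
    ∃ μ, ν = μ + Finsupp.single i 1 :=
  ⟨ν - Finsupp.single i 1,
    (tsub_add_cancel_of_le (Finsupp.single_le_iff.mpr (by omega))).symm⟩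

theorem eval_ne {i j : ZMod N} (hji : j ≠ i) (ρ : ZMod N →₀ ℕ) :
    (ρ + Finsupp.single j 1 : ZMod N →₀ ℕ) i = ρ i := by
  rw [Finsupp.add_apply, Finsupp.single_apply, if_neg hji, add_zero]

theorem eval_eq {i j : ZMod N} (hji : j = i) (ρ : ZMod N →₀ ℕ) :
    (ρ + Finsupp.single j 1 : ZMod N →₀ ℕ) i = ρ i + 1 := by
  rw [Finsupp.add_apply, Finsupp.single_apply, if_pos hji]

theorem xcheck_lin (q : ℂ) (i : ZMod N) : LinOp (xcheck (N := N) q i) := by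
  intro M c g
  funext ν
  by_cases h : ν i = 0
  · refine (xcheck_zero' q i _ ν h).trans ?_
    exact (Finset.sum_eq_zero fun m _ => by rw [xcheck_zero' q i _ ν h, mul_zero]).symm
  · obtain ⟨μ, rfl⟩ := single_decomp h
    refine (xcheck_add q i _ μ).trans ?_
    have hc : ∀ m ∈ Finset.range M, c m * xcheck q i (g m) (μ + Finsupp.single i 1)
        = c m * (q ^ (-(μ i : ℤ)) * (q ^ (μ (i-1)) * g m μ)) :=
      fun m _ => by rw [xcheck_add]
    rw [Finset.sum_congr rfl hc]
    show q ^ (-(μ i : ℤ)) * (q ^ (μ (i-1)) * ∑ m ∈ Finset.range M, c m * g m μ) = _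
    rw [Finset.mul_sum, Finset.mul_sum]
    exact Finset.sum_congr rfl fun m _ => by ring

theorem xcheck_loc (q : ℂ) (i : ZMod N) : LocOp (xcheck (N := N) q i) := by
  intro D f g hfg ν hν
  by_cases h : ν i = 0
  · rw [xcheck_zero' q i _ ν h, xcheck_zero' q i _ ν h]
  · obtain ⟨μ, rfl⟩ := single_decomp h
    rw [xcheck_add, xcheck_add]
    have hd : degOf μ < D := by
      rw [degOf_add, degOf_single] at hν; omega
    rw [hfg μ hd]

theorem xhat_lin (q : ℂ) (α : ZMod N → ℂ) (i : ZMod N) : LinOp (xhat (N := N) q α i) := by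
  intro M c g
  funext ν
  by_cases h : ν i = 0
  · refine (xhat_zero' q α i _ ν h).trans ?_
    exact (Finset.sum_eq_zero fun m _ => by rw [xhat_zero' q α i _ ν h, mul_zero]).symm
  · obtain ⟨μ, rfl⟩ := single_decomp h
    refine (xhat_add q α i _ μ).trans ?_
    have hc : ∀ m ∈ Finset.range M, c m * xhat q α i (g m) (μ + Finsupp.single i 1)
        = c m * (α i * (q ^ (μ i) * (q ^ (-(μ (i-1) : ℤ)) * g m μ))) :=
      fun m _ => by rw [xhat_add]
    rw [Finset.sum_congr rfl hc]
    show α i * (q ^ (μ i) * (q ^ (-(μ (i-1) : ℤ)) * ∑ m ∈ Finset.range M, c m * g m μ)) = _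
    rw [Finset.mul_sum, Finset.mul_sum, Finset.mul_sum]
    exact Finset.sum_congr rfl fun m _ => by ring

theorem xhat_loc (q : ℂ) (α : ZMod N → ℂ) (i : ZMod N) : LocOp (xhat (N := N) q α i) := by
  intro D f g hfg ν hν
  by_cases h : ν i = 0
  · rw [xhat_zero' q α i _ ν h, xhat_zero' q α i _ ν h]
  · obtain ⟨μ, rfl⟩ := single_decomp h
    rw [xhat_add, xhat_add]
    have hd : degOf μ < D := by
      rw [degOf_add, degOf_single] at hν; omega
    rw [hfg μ hd]

theorem xcheck_zero_outer (q : ℂ) {i j : ZMod N} (hij : i ≠ j) (f : Ser N)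
    (ν : ZMod N →₀ ℕ) (h : ν i = 0) : xcheck q j (xcheck q i f) ν = 0 := by
  by_cases hj : ν j = 0
  · exact xcheck_zero' q j _ ν hj
  · obtain ⟨μ, rfl⟩ := single_decomp hj
    rw [xcheck_add]
    have hμ : μ i = 0 := by
      rw [eval_ne (fun hh => hij hh.symm)] at h
      exact h
    rw [xcheck_zero' q i f μ hμ, mul_zero, mul_zero]

theorem xhat_zero_outer (q : ℂ) (α : ZMod N → ℂ) {i j : ZMod N} (hij : i ≠ j) (f : Ser N)
    (ν : ZMod N →₀ ℕ) (h : ν i = 0) : xhat q α j (xhat q α i f) ν = 0 := by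
  by_cases hj : ν j = 0
  · exact xhat_zero' q α j _ ν hj
  · obtain ⟨μ, rfl⟩ := single_decomp hj
    rw [xhat_add]
    have hμ : μ i = 0 := by
      rw [eval_ne (fun hh => hij hh.symm)] at h
      exact h
    rw [xhat_zero' q α i f μ hμ, mul_zero, mul_zero, mul_zero]

theorem split2 {i j : ZMod N} (hij : i ≠ j) {ν : ZMod N →₀ ℕ}
    (hi : ν i ≠ 0) (hj : ν j ≠ 0) :
    ∃ ρ, ν = ρ + Finsupp.single j 1 + Finsupp.single i 1 := by
  obtain ⟨μ, rfl⟩ := single_decomp hi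
  have hμj : μ j ≠ 0 := by
    rw [eval_ne hij] at hj
    exact hj
  obtain ⟨ρ, rfl⟩ := single_decomp hμj
  exact ⟨ρ, rfl⟩

theorem xcheck_comm (q : ℂ) {i j : ZMod N} (hij : i ≠ j) (h1 : j ≠ i - 1) (h2 : i ≠ j - 1)
    (f : Ser N) (ν : ZMod N →₀ ℕ) :
    xcheck q i (xcheck q j f) ν = xcheck q j (xcheck q i f) ν := by
  by_cases hi : ν i = 0
  · rw [xcheck_zero' q i _ ν hi, xcheck_zero_outer q hij f ν hi]
  by_cases hj : ν j = 0
  · rw [xcheck_zero_outer q (Ne.symm hij) f ν hj, xcheck_zero' q j _ ν hj]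
  obtain ⟨ρ, rfl⟩ := split2 hij hi hj
  have hrhs : xcheck q j (xcheck q i f) (ρ + Finsupp.single j 1 + Finsupp.single i 1)
      = xcheck q j (xcheck q i f) (ρ + Finsupp.single i 1 + Finsupp.single j 1) := by
    rw [add_right_comm]
  rw [hrhs, xcheck_add, xcheck_add, xcheck_add, xcheck_add]
  rw [eval_ne (Ne.symm hij), eval_ne h1, eval_ne hij, eval_ne h2]
  ring

theorem xcheck_q (q : ℂ) {i j : ZMod N} (hij : i ≠ j) (hj : j = i - 1) (h2 : i ≠ j - 1)
    (f : Ser N) (ν : ZMod N →₀ ℕ) :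
    xcheck q i (xcheck q j f) ν = q * xcheck q j (xcheck q i f) ν := by
  by_cases hi : ν i = 0
  · rw [xcheck_zero' q i _ ν hi, xcheck_zero_outer q hij f ν hi, mul_zero]
  by_cases hjz : ν j = 0
  · rw [xcheck_zero_outer q (Ne.symm hij) f ν hjz, xcheck_zero' q j _ ν hjz, mul_zero]
  obtain ⟨ρ, rfl⟩ := split2 hij hi hjz
  have hrhs : xcheck q j (xcheck q i f) (ρ + Finsupp.single j 1 + Finsupp.single i 1)
      = xcheck q j (xcheck q i f) (ρ + Finsupp.single i 1 + Finsupp.single j 1) := by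
    rw [add_right_comm]
  rw [hrhs, xcheck_add, xcheck_add, xcheck_add, xcheck_add]
  rw [eval_ne (Ne.symm hij), eval_eq hj, eval_ne hij, eval_ne h2, pow_succ]
  ring

theorem xhat_comm (q : ℂ) (α : ZMod N → ℂ) {i j : ZMod N} (hij : i ≠ j) (h1 : j ≠ i - 1)
    (h2 : i ≠ j - 1) (f : Ser N) (ν : ZMod N →₀ ℕ) :
    xhat q α i (xhat q α j f) ν = xhat q α j (xhat q α i f) ν := by
  by_cases hi : ν i = 0
  · rw [xhat_zero' q α i _ ν hi, xhat_zero_outer q α hij f ν hi]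
  by_cases hj : ν j = 0
  · rw [xhat_zero_outer q α (Ne.symm hij) f ν hj, xhat_zero' q α j _ ν hj]
  obtain ⟨ρ, rfl⟩ := split2 hij hi hj
  have hrhs : xhat q α j (xhat q α i f) (ρ + Finsupp.single j 1 + Finsupp.single i 1)
      = xhat q α j (xhat q α i f) (ρ + Finsupp.single i 1 + Finsupp.single j 1) := by
    rw [add_right_comm]
  rw [hrhs, xhat_add, xhat_add, xhat_add, xhat_add]
  rw [eval_ne (Ne.symm hij), eval_ne h1, eval_ne hij, eval_ne h2]
  ring

theorem xhat_q (q : ℂ) (hq0 : q ≠ 0) (α : ZMod N → ℂ) {i j : ZMod N} (hij : i ≠ j)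
    (hi : i = j - 1) (h1 : j ≠ i - 1) (f : Ser N) (ν : ZMod N →₀ ℕ) :
    xhat q α i (xhat q α j f) ν = q * xhat q α j (xhat q α i f) ν := by
  by_cases hiz : ν i = 0
  · rw [xhat_zero' q α i _ ν hiz, xhat_zero_outer q α hij f ν hiz, mul_zero]
  by_cases hjz : ν j = 0
  · rw [xhat_zero_outer q α (Ne.symm hij) f ν hjz, xhat_zero' q α j _ ν hjz, mul_zero]
  obtain ⟨ρ, rfl⟩ := split2 hij hiz hjz
  have hrhs : xhat q α j (xhat q α i f) (ρ + Finsupp.single j 1 + Finsupp.single i 1)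
      = xhat q α j (xhat q α i f) (ρ + Finsupp.single i 1 + Finsupp.single j 1) := by
    rw [add_right_comm]
  rw [hrhs, xhat_add, xhat_add, xhat_add, xhat_add]
  rw [eval_ne (Ne.symm hij), eval_ne h1, eval_ne hij, eval_eq hi]
  have hzp : q ^ (-((ρ (j-1) + 1 : ℕ) : ℤ)) * q = q ^ (-(ρ (j-1) : ℤ)) := by
    calc q ^ (-((ρ (j-1) + 1 : ℕ) : ℤ)) * q
        = q ^ (-((ρ (j-1) + 1 : ℕ) : ℤ)) * q ^ (1:ℤ) := by rw [zpow_one]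
      _ = q ^ ((-((ρ (j-1) + 1 : ℕ) : ℤ)) + 1) := (zpow_add₀ hq0 _ _).symm
      _ = q ^ (-(ρ (j-1) : ℤ)) := by congr 1; push_cast; ring
  linear_combination (-(α i * α j * q ^ (ρ i) * q ^ (ρ j)
    * q ^ (-(ρ (i-1) : ℤ)) * f ρ)) * hzp

-- ===== composition stack utilities =====

theorem compAsc_succ' {β : Type*} (F : ℕ → β → β) (k : ℕ) (x : β) :
    compAsc F (k+1) x = compAsc F k (F k x) := rfl

theorem compDesc_succ' {β : Type*} (F : ℕ → β → β) (k : ℕ) (x : β) :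
    compDesc F (k+1) x = F k (compDesc F k x) := rfl

theorem compAsc_lin {F : ℕ → Ser N → Ser N} (hF : ∀ m, LinOp (F m)) (k : ℕ) :
    LinOp (compAsc F k) := by
  induction k with
  | zero => exact LinOp.id
  | succ k ih => exact ih.comp (hF k)

theorem compAsc_loc {F : ℕ → Ser N → Ser N} (hF : ∀ m, LocOp (F m)) :
    ∀ k, 1 ≤ k → LocOp (compAsc F k) := by
  intro k
  induction k with
  | zero => omega
  | succ k ih =>
      intro _
      by_cases h : k = 0
      · subst h
        intro D f g hfg ν hν
        exact hF 0 D f g hfg ν hν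
      · exact (ih (by omega)).comp (hF k)

theorem compDesc_lin {F : ℕ → Ser N → Ser N} (hF : ∀ m, LinOp (F m)) (k : ℕ) :
    LinOp (compDesc F k) := by
  induction k with
  | zero => exact LinOp.id
  | succ k ih => exact (hF k).comp ih

theorem compDesc_loc {F : ℕ → Ser N → Ser N} (hF : ∀ m, LocOp (F m)) :
    ∀ k, 1 ≤ k → LocOp (compDesc F k) := by
  intro k
  induction k with
  | zero => omega
  | succ k ih =>
      intro _
      by_cases h : k = 0
      · subst h
        intro D f g hfg ν hν
        exact hF 0 D f g hfg ν hν
      · exact (hF k).comp (ih (by omega))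

theorem commAsc {P : Ser N → Ser N} {H : ℕ → Ser N → Ser N} :
    ∀ k, (∀ i < k, ∀ x, P (H i x) = H i (P x)) →
      ∀ x, P (compAsc H k x) = compAsc H k (P x)
  | 0, _, x => rfl
  | k+1, hc, x => by
      show P (compAsc H k (H k x)) = compAsc H k (H k (P x))
      rw [commAsc k (fun i hi => hc i (by omega)) (H k x), hc k (by omega) x]

theorem commDesc {P : Ser N → Ser N} {H : ℕ → Ser N → Ser N} :
    ∀ k, (∀ i < k, ∀ x, P (H i x) = H i (P x)) →
      ∀ x, compDesc H k (P x) = P (compDesc H k x)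
  | 0, _, x => rfl
  | k+1, hc, x => by
      show H k (compDesc H k (P x)) = P (H k (compDesc H k x))
      rw [commDesc k (fun i hi => hc i (by omega)) x, hc k (by omega) (compDesc H k x)]

theorem qc_compAsc {B : Ser N → Ser N} {G : ℕ → Ser N → Ser N}
    (hlin : ∀ t, LinOp (G t)) (c : ℕ → ℂ) :
    ∀ m, (∀ t < m, ∀ f ν, B (G t f) ν = c t * G t (B f) ν) →
      ∀ f ν, B (compAsc G m f) ν
        = (∏ t ∈ Finset.range m, c t) * compAsc G m (B f) ν := by
  intro m
  induction m with
  | zero => intro _ f ν; simp [compAsc]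
  | succ m ih =>
      intro h f ν
      rw [compAsc_succ', compAsc_succ']
      rw [ih (fun t ht => h t (by omega)) (G m f) ν]
      have hstep : B (G m f) = fun ν => c m * G m (B f) ν :=
        funext (h m (by omega) f)
      rw [hstep, (compAsc_lin hlin m).smul_apply, Finset.prod_range_succ]
      ring

theorem qc_compDesc {B : Ser N → Ser N} {G : ℕ → Ser N → Ser N}
    (hlin : ∀ t, LinOp (G t)) (c : ℕ → ℂ) :
    ∀ m, (∀ t < m, ∀ f ν, G t (B f) ν = c t * B (G t f) ν) →
      ∀ f ν, compDesc G m (B f) ν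
        = (∏ t ∈ Finset.range m, c t) * B (compDesc G m f) ν := by
  intro m
  induction m with
  | zero => intro _ f ν; simp [compDesc]
  | succ m ih =>
      intro h f ν
      rw [compDesc_succ', compDesc_succ']
      have hrec : compDesc G m (B f) = fun ν => (∏ t ∈ Finset.range m, c t)
          * B (compDesc G m f) ν :=
        funext (ih (fun t ht => h t (by omega)) f)
      rw [hrec, (hlin m).smul_apply, h m (by omega) (compDesc G m f) ν,
        Finset.prod_range_succ]
      ring

theorem compAsc_peel {β : Type*} (G : ℕ → β → β) :
    ∀ k x, compAsc G (k+1) x = G 0 (compAsc (fun j => G (j+1)) k x)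
  | 0, x => rfl
  | k+1, x => by
      show compAsc G (k+1) (G (k+1) x) = _
      rw [compAsc_peel G k (G (k+1) x)]
      rfl

theorem compAsc_congr {β : Type*} {F G : ℕ → β → β} :
    ∀ k, (∀ j < k, F j = G j) → ∀ x, compAsc F k x = compAsc G k x
  | 0, _, _ => rfl
  | k+1, h, x => by
      show compAsc F k (F k x) = compAsc G k (G k x)
      rw [h k (by omega), compAsc_congr k (fun j hj => h j (by omega))]

theorem compDesc_rev {β : Type*} (F : ℕ → β → β) :
    ∀ k x, compDesc F k x = compAsc (fun j => F (k-1-j)) k x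
  | 0, x => rfl
  | k+1, x => by
      show F k (compDesc F k x) = compAsc (fun j => F (k-j)) (k+1) x
      rw [compAsc_peel (fun j => F (k-j)) k x]
      have e : ∀ j, k - (j+1) = k - 1 - j := fun j => by omega
      have h1 : (fun j => F (k - (j+1))) = fun j => F (k-1-j) :=
        funext fun j => by rw [e j]
      show F k (compDesc F k x) = F (k-0) (compAsc (fun j => F (k - (j+1))) k x)
      rw [Nat.sub_zero, h1, compDesc_rev F k x]

-- ===== ZMod index helpers =====

theorem cast_inj_lt [NeZero N] {a b : ℕ} (ha : a < N) (hb : b < N)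
    (h : (a : ZMod N) = (b : ZMod N)) : a = b := by
  have := congrArg ZMod.val h
  rwa [ZMod.val_cast_of_lt ha, ZMod.val_cast_of_lt hb] at this

theorem cast_ne_lt [NeZero N] {a b : ℕ} (ha : a < N) (hb : b < N) (h : a ≠ b) :
    (a : ZMod N) ≠ (b : ZMod N) := fun hh => h (cast_inj_lt ha hb hh)

-- ===== main induction, left block =====

theorem mainL [NeZero N] (q : ℂ) (hq : ∀ n : ℕ, 0 < n → q ^ n ≠ 1) (hN : 3 ≤ N) :
    ∀ k, k ≤ N - 2 → ∀ g : Ser N,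
      compDesc (fun j => eqExp q (xcheck (N := N) q (j + 1 : ℕ))) k
        (eqExp q (xcheck (N := N) q 0)
          (compAsc (fun j => EqExp q (xcheck (N := N) q (j + 1 : ℕ))) k g))
      = compAsc (fun j =>
          eqExp q (compAsc (fun m => xcheck (N := N) q (m : ℕ)) (j + 1))) (k + 1) g := by
  intro k
  induction k with
  | zero =>
      intro _ g
      show eqExp q (xcheck (N := N) q 0) g
          = eqExp q (compAsc (fun m => xcheck (N := N) q (m : ℕ)) 1) g
      have h1 : compAsc (fun m => xcheck (N := N) q (m : ℕ)) 1 = xcheck (N := N) q 0 := by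
        funext f
        show xcheck (N := N) q ((0 : ℕ) : ZMod N) f = xcheck q 0 f
        rw [Nat.cast_zero]
      rw [h1]
  | succ k ih =>
      intro hk g
      have hk' : k ≤ N - 2 := by omega
      have hkN : k + 1 < N := by omega
      have hk2N : k + 2 < N := by omega
      set B := xcheck (N := N) q ((k + 1 : ℕ) : ZMod N) with hB
      have hBl : LinOp B := xcheck_lin q _
      have hBo : LocOp B := xcheck_loc q _
      -- pairwise commutation of B with low xchecks
      have hpc : ∀ t, t < k → ∀ (f : Ser N) ν,
          B (xcheck (N := N) q (t : ℕ) f) ν = xcheck (N := N) q (t : ℕ) (B f) ν := by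
        intro t ht f ν
        refine xcheck_comm q ?_ ?_ ?_ f ν
        · exact cast_ne_lt hkN (by omega) (by omega)
        · intro hh
          have h2 : ((t : ℕ) : ZMod N) = ((k : ℕ) : ZMod N) := by
            push_cast at hh ⊢
            linear_combination hh
          exact absurd (cast_inj_lt (by omega) (by omega) h2) (by omega)
        · intro hh
          have h2 : ((k + 2 : ℕ) : ZMod N) = ((t : ℕ) : ZMod N) := by
            push_cast at hh ⊢
            linear_combination hh
          exact absurd (cast_inj_lt hk2N (by omega) h2) (by omega)
      -- B commutes with Y_{i+1} for i < k
      have hYcomm : ∀ i, i < k → ∀ f : Ser N,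
          B (compAsc (fun m => xcheck (N := N) q (m : ℕ)) (i + 1) f)
            = compAsc (fun m => xcheck (N := N) q (m : ℕ)) (i + 1) (B f) := by
        intro i hi f
        funext ν
        have h := qc_compAsc (B := B) (G := fun m => xcheck (N := N) q (m : ℕ))
          (fun t => xcheck_lin q _) (fun _ => (1:ℂ)) (i + 1)
          (fun t ht f ν => by rw [one_mul]; exact hpc t (by omega) f ν) f ν
        simpa using h
      -- q-commutation of B with Y_{k+1}
      have hqrel : ∀ (f : Ser N) ν,
          B (compAsc (fun m => xcheck (N := N) q (m : ℕ)) (k + 1) f) ν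
            = q * compAsc (fun m => xcheck (N := N) q (m : ℕ)) (k + 1) (B f) ν := by
        intro f ν
        have h := qc_compAsc (B := B) (G := fun m => xcheck (N := N) q (m : ℕ))
          (fun t => xcheck_lin q _) (fun t => if t = k then q else 1) (k + 1)
          (fun t ht f ν => by
            by_cases hcase : t = k
            · rw [if_pos hcase, hcase]
              refine xcheck_q q ?_ ?_ ?_ f ν
              · exact cast_ne_lt hkN (show k < N by omega) (by omega)
              · push_cast
                ring
              · intro hh
                have h2 : ((k + 2 : ℕ) : ZMod N) = ((k : ℕ) : ZMod N) := by
                  push_cast at hh ⊢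
                  linear_combination hh
                exact absurd (cast_inj_lt hk2N (show k < N by omega) h2) (by omega)
            · rw [if_neg hcase, one_mul]
              exact hpc t (by omega) f ν) f ν
        rw [h, Finset.prod_ite_eq' (Finset.range (k+1)) k (fun _ => q),
          if_pos (Finset.self_mem_range_succ k)]
      -- lin/loc of Y_{k+1}
      have hYl : LinOp (compAsc (fun m => xcheck (N := N) q (m : ℕ)) (k + 1)) :=
        compAsc_lin (fun t => xcheck_lin q _) (k + 1)
      have hYo : LocOp (compAsc (fun m => xcheck (N := N) q (m : ℕ)) (k + 1)) :=
        compAsc_loc (fun t => xcheck_loc q _) (k + 1) (by omega)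
      -- commutation of exponentials
      have hcomm : ∀ i < k, ∀ x : Ser N,
          eqExp q B ((fun j => eqExp q
              (compAsc (fun m => xcheck (N := N) q (m : ℕ)) (j + 1))) i x)
            = (fun j => eqExp q
              (compAsc (fun m => xcheck (N := N) q (m : ℕ)) (j + 1))) i (eqExp q B x) := by
        intro i hi x
        exact exp_comm hBl hBo
          (compAsc_lin (fun t => xcheck_lin q _) (i + 1))
          (compAsc_loc (fun t => xcheck_loc q _) (i + 1) (by omega))
          (hYcomm i hi) (eCo q) (eCo q) x
      -- assemble
      rw [compDesc_succ', compAsc_succ', ih hk' (EqExp q B g), compAsc_succ']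
      rw [commAsc k hcomm]
      rw [pentL hq hYl hYo hBl hBo hqrel g]
      rw [compAsc_succ'
        (fun j => eqExp q (compAsc (fun m => xcheck (N := N) q (m : ℕ)) (j + 1))) (k+1) g,
        compAsc_succ'
        (fun j => eqExp q (compAsc (fun m => xcheck (N := N) q (m : ℕ)) (j + 1))) k]
      rfl

-- ===== main induction, right block =====

theorem mainR [NeZero N] (q : ℂ) (hq0 : q ≠ 0) (hq : ∀ n : ℕ, 0 < n → q ^ n ≠ 1)
    (hN : 3 ≤ N) (α : ZMod N → ℂ) :
    ∀ k, k ≤ N - 2 → ∀ g : Ser N,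
      compDesc (fun j => EqExp q (xhat (N := N) q α (j + 1 : ℕ))) k
        (eqExp q (xhat (N := N) q α 0)
          (compAsc (fun j => eqExp q (xhat (N := N) q α (j + 1 : ℕ))) k g))
      = compDesc (fun j =>
          eqExp q (compDesc (fun m => xhat (N := N) q α (m : ℕ)) (j + 2))) k
          (eqExp q (xhat (N := N) q α 0) g) := by
  intro k
  induction k with
  | zero => intro _ g; rfl
  | succ k ih =>
      intro hk g
      have hk' : k ≤ N - 2 := by omega
      rw [compDesc_succ', compAsc_succ', ih hk']
      by_cases hk0 : k = 0
      · subst hk0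
        -- pentagon directly
        have h1N : 1 < N := by omega
        have h2N : 2 < N := by omega
        have hrel : ∀ (f : Ser N) ν, xhat (N := N) q α 0 (xhat q α ((0 + 1 : ℕ) : ZMod N) f) ν
            = q * xhat q α ((0 + 1 : ℕ) : ZMod N) (xhat q α 0 f) ν := by
          intro f ν
          refine xhat_q q hq0 α ?_ ?_ ?_ f ν
          · intro hh
            have h2 : ((0 : ℕ) : ZMod N) = ((0 + 1 : ℕ) : ZMod N) := by
              rw [Nat.cast_zero]; exact hh
            exact absurd (cast_inj_lt (by omega) (by omega) h2) (by omega)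
          · push_cast; ring
          · intro hh
            have h2 : ((0 + 2 : ℕ) : ZMod N) = ((0 : ℕ) : ZMod N) := by
              push_cast at hh ⊢
              linear_combination hh
            exact absurd (cast_inj_lt (by omega) (by omega) h2) (by omega)
        have hpent := pentR hq
          (xhat_lin q α (0 : ZMod N)) (xhat_loc q α (0 : ZMod N))
          (xhat_lin q α ((0 + 1 : ℕ) : ZMod N)) (xhat_loc q α ((0 + 1 : ℕ) : ZMod N))
          hrel g
        show EqExp q (xhat q α ((0 + 1 : ℕ) : ZMod N))
            (eqExp q (xhat q α 0) (eqExp q (xhat q α ((0 + 1 : ℕ) : ZMod N)) g)) = _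
        rw [hpent]
        have hop : (xhat (N := N) q α ((0 + 1 : ℕ) : ZMod N) ∘ xhat (N := N) q α 0)
            = compDesc (fun m => xhat (N := N) q α (m : ℕ)) (0 + 2) := by
          funext f
          show xhat q α ((0 + 1 : ℕ) : ZMod N) (xhat q α 0 f)
              = xhat q α ((1 : ℕ) : ZMod N) (xhat q α ((0 : ℕ) : ZMod N) f)
          rw [Nat.cast_zero]
        rw [hop]
        rfl
      · obtain ⟨k', rfl⟩ : ∃ k', k = k' + 1 := ⟨k - 1, by omega⟩
        have hkN : k' + 2 < N := by omega
        have hk3N : k' + 3 < N := by omega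
        set B := xhat (N := N) q α ((k' + 1 + 1 : ℕ) : ZMod N) with hBdef
        have hBl : LinOp B := xhat_lin q α _
        have hBo : LocOp B := xhat_loc q α _
        -- pairwise commutation of B with low xhats
        have hpc : ∀ t, t < k' + 1 → ∀ (f : Ser N) ν,
            xhat (N := N) q α (t : ℕ) (B f) ν = B (xhat (N := N) q α (t : ℕ) f) ν := by
          intro t ht f ν
          refine xhat_comm q α ?_ ?_ ?_ f ν
          · exact cast_ne_lt (by omega) hkN (by omega)
          · intro hh
            have h2 : ((k' + 3 : ℕ) : ZMod N) = ((t : ℕ) : ZMod N) := by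
              push_cast at hh ⊢
              linear_combination hh
            exact absurd (cast_inj_lt hk3N (by omega) h2) (by omega)
          · intro hh
            have h2 : ((t + 1 : ℕ) : ZMod N) = ((k' + 2 : ℕ) : ZMod N) := by
              push_cast at hh ⊢
              linear_combination hh
            exact absurd (cast_inj_lt (by omega) hkN h2) (by omega)
        -- swap e0 with eqExp q B
        have hswap0 : ∀ (f : Ser N) ν, xhat (N := N) q α 0 (B f) ν
            = B (xhat (N := N) q α 0 f) ν := by
          intro f ν
          refine xhat_comm q α ?_ ?_ ?_ f ν
          · intro hh
            have h2 : ((0 : ℕ) : ZMod N) = ((k' + 2 : ℕ) : ZMod N) := by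
              push_cast at hh ⊢
              linear_combination hh
            exact absurd (cast_inj_lt (by omega) hkN h2) (by omega)
          · intro hh
            have h2 : ((k' + 3 : ℕ) : ZMod N) = ((0 : ℕ) : ZMod N) := by
              push_cast at hh ⊢
              linear_combination hh
            exact absurd (cast_inj_lt hk3N (by omega) h2) (by omega)
          · intro hh
            have h2 : ((1 : ℕ) : ZMod N) = ((k' + 2 : ℕ) : ZMod N) := by
              push_cast at hh ⊢
              linear_combination hh
            exact absurd (cast_inj_lt (by omega) hkN h2) (by omega)
        have hswap : eqExp q (xhat (N := N) q α 0) (eqExp q B g)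
            = eqExp q B (eqExp q (xhat (N := N) q α 0) g) :=
          exp_comm (xhat_lin q α 0) (xhat_loc q α 0) hBl hBo
            (fun f => funext fun ν => hswap0 f ν) (eCo q) (eCo q) g
        rw [hswap]
        -- move eqExp q B through the lower Hr factors
        rw [compDesc_succ'
          (fun j => eqExp q (compDesc (fun m => xhat (N := N) q α (m : ℕ)) (j + 2))) k']
        have hWcomm : ∀ i, i < k' → ∀ (f : Ser N),
            compDesc (fun m => xhat (N := N) q α (m : ℕ)) (i + 2) (B f)
              = B (compDesc (fun m => xhat (N := N) q α (m : ℕ)) (i + 2) f) := by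
          intro i hi f
          funext ν
          have h := qc_compDesc (B := B) (G := fun m => xhat (N := N) q α (m : ℕ))
            (fun t => xhat_lin q α _) (fun _ => (1:ℂ)) (i + 2)
            (fun t ht f ν => by rw [one_mul]; exact hpc t (by omega) f ν) f ν
          simpa using h
        have hcommHr : ∀ i < k', ∀ x : Ser N,
            eqExp q B ((fun j => eqExp q
                (compDesc (fun m => xhat (N := N) q α (m : ℕ)) (j + 2))) i x)
              = (fun j => eqExp q
                (compDesc (fun m => xhat (N := N) q α (m : ℕ)) (j + 2))) i
                  (eqExp q B x) := by
          intro i hi x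
          exact (exp_comm (compDesc_lin (fun t => xhat_lin q α _) (i + 2))
            (compDesc_loc (fun t => xhat_loc q α _) (i + 2) (by omega))
            hBl hBo (hWcomm i hi) (eCo q) (eCo q) x).symm
        rw [commDesc k' hcommHr (eqExp q (xhat (N := N) q α 0) g)]
        -- pentagon with A = W_{k'+2}
        have hrel : ∀ (f : Ser N) ν,
            compDesc (fun m => xhat (N := N) q α (m : ℕ)) (k' + 2) (B f) ν
              = q * B (compDesc (fun m => xhat (N := N) q α (m : ℕ)) (k' + 2) f) ν := by
          intro f ν
          have h := qc_compDesc (B := B) (G := fun m => xhat (N := N) q α (m : ℕ))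
            (fun t => xhat_lin q α _) (fun t => if t = k' + 1 then q else 1) (k' + 2)
            (fun t ht f ν => by
              by_cases hcase : t = k' + 1
              · rw [if_pos hcase, hcase]
                refine xhat_q q hq0 α ?_ ?_ ?_ f ν
                · exact cast_ne_lt (by omega) hkN (by omega)
                · push_cast
                  ring
                · intro hh
                  have h2 : ((k' + 3 : ℕ) : ZMod N) = ((k' + 1 : ℕ) : ZMod N) := by
                    push_cast at hh ⊢
                    linear_combination hh
                  exact absurd (cast_inj_lt hk3N (by omega) h2) (by omega)
              · rw [if_neg hcase, one_mul]
                exact hpc t (by omega) f ν) f ν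
          rw [h, Finset.prod_ite_eq' (Finset.range (k'+2)) (k'+1) (fun _ => q),
            if_pos (Finset.self_mem_range_succ (k'+1))]
        have hpent := pentR hq
          (compDesc_lin (fun t => xhat_lin q α _) (k' + 2))
          (compDesc_loc (fun t => xhat_loc q α _) (k' + 2) (by omega))
          hBl hBo hrel
          (compDesc (fun j => eqExp q
            (compDesc (fun m => xhat (N := N) q α (m : ℕ)) (j + 2))) k'
            (eqExp q (xhat (N := N) q α 0) g))
        rw [hpent]
        rw [compDesc_succ'
          (fun j => eqExp q (compDesc (fun m => xhat (N := N) q α (m : ℕ)) (j + 2))) (k'+1),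
          compDesc_succ'
          (fun j => eqExp q (compDesc (fun m => xhat (N := N) q α (m : ℕ)) (j + 2))) k']
        rfl

/-- **Proposition 2.3**, left and right blocks:
`A_L^{(s)} = A_L^{(h)}` and `A_R^{(s)} = A_R^{(h)}`. -/
theorem factorized_forms_agree (q : ℂ) (hq0 : q ≠ 0) (hq : ∀ n : ℕ, 0 < n → q ^ n ≠ 1)
    (N : ℕ) [NeZero N] (hN : 3 ≤ N) (α : ZMod N → ℂ) :
    -- left block:  G_L⁻¹ ∘ e(−x̌_0) ∘ G_L ∘ e(−x̌_{N−1}) ∘ ⋯ ∘ e(−x̌_1) ∘ M_{φ(Λ)}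
    --   = e(−x̌_0) ∘ e(−x̌_0x̌_1) ∘ ⋯ ∘ e(−x̌_0⋯x̌_{N−2}) ∘ e(−x̌_{N−1}) ∘ ⋯ ∘ e(−x̌_1) ∘ M_{φ(Λ)}
    ((compDesc (fun j => eqExp q (xcheck (N := N) q (j + 1 : ℕ))) (N - 2))
        ∘ eqExp q (xcheck (N := N) q 0)
        ∘ (compAsc (fun j => EqExp q (xcheck (N := N) q (j + 1 : ℕ))) (N - 2))
        ∘ (compDesc (fun j => eqExp q (xcheck (N := N) q (j + 1 : ℕ))) (N - 1))
        ∘ (fun f => phiLam (N := N) q 1 * f)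
      = (compAsc (fun j =>
            eqExp q (compAsc (fun m => xcheck (N := N) q (m : ℕ)) (j + 1))) (N - 1))
        ∘ (compDesc (fun j => eqExp q (xcheck (N := N) q (j + 1 : ℕ))) (N - 1))
        ∘ (fun f => phiLam (N := N) q 1 * f))
    ∧
    -- right block:  M_{φ(q^{1−N}DΛ)} ∘ e(−x̂_1) ∘ ⋯ ∘ e(−x̂_{N−1}) ∘ G_R ∘ e(−x̂_0) ∘ G_R⁻¹
    --   = M_{φ(q^{1−N}DΛ)} ∘ e(−x̂_1) ∘ ⋯ ∘ e(−x̂_{N−1})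
    --       ∘ e(−x̂_{N−2}⋯x̂_1x̂_0) ∘ ⋯ ∘ e(−x̂_1x̂_0) ∘ e(−x̂_0)
    ((fun f => phiLam (N := N) q (q ^ ((1 : ℤ) - (N : ℤ)) * ∏ i : ZMod N, α i) * f)
        ∘ (compAsc (fun j => eqExp q (xhat q α (j + 1 : ℕ))) (N - 1))
        ∘ (compDesc (fun j => EqExp q (xhat q α (j + 1 : ℕ))) (N - 2))
        ∘ eqExp q (xhat q α 0)
        ∘ (compAsc (fun j => eqExp q (xhat q α (j + 1 : ℕ))) (N - 2))
      = (fun f => phiLam (N := N) q (q ^ ((1 : ℤ) - (N : ℤ)) * ∏ i : ZMod N, α i) * f)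
        ∘ (compAsc (fun j => eqExp q (xhat q α (j + 1 : ℕ))) (N - 1))
        ∘ (compAsc (fun j =>
            eqExp q (compDesc (fun m => xhat q α (m : ℕ)) ((N - 2 - j) + 1))) (N - 2))
        ∘ eqExp q (xhat q α 0)) := by
  constructor
  · funext f
    simp only [Function.comp_apply]
    rw [mainL (N := N) q hq hN (N - 2) le_rfl]
    have e : N - 2 + 1 = N - 1 := by omega
    rw [e]
  · funext f
    simp only [Function.comp_apply]
    congr 1
    congr 1
    rw [mainR (N := N) q hq0 hq hN α (N - 2) le_rfl]
    rw [compDesc_rev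
      (fun j => eqExp q (compDesc (fun m => xhat (N := N) q α (m : ℕ)) (j + 2))) (N - 2)]
    refine compAsc_congr (N - 2) ?_ _
    intro j hj
    have e : N - 2 - 1 - j + 2 = N - 2 - j + 1 := by omega
    rw [e]
end
end
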